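/- arXiv:2010.03050 — 8 statements merged into one kernel-verified Lean document; each statement's English description precedes it below -/
import Mathlib

section
/- Suppose in the mixed HK model that all pairs of opinions at time t are within distance ε (so every agent is a neighbor of every other). Then max_{i,j} ‖xᵢ(t+1) - xⱼ(t+1)‖ ≤ β_t · max_{i,j} ‖xᵢ(t) - xⱼ(t)‖, where β_t = max_{i,j : αᵢ(t) ≥ αⱼ(t)} ( αᵢ(t) - (αᵢ(t) - αⱼ(t))/n ). -/
/-- Lemma 4: if the configuration at time `t` is ε-trivial (all agents are
mutual neighbors), then the maximal pairwise distance contracts by the factor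
`β t = max_{αᵢ ≥ αⱼ} (αᵢ - (αᵢ - αⱼ)/n)`. -/
theorem mixedHK_contraction_of_eps_trivial (n d : ℕ) (ε : ℝ) (hε : 0 < ε)
    (x : ℕ → Fin n → EuclideanSpace ℝ (Fin d))
    (α : ℕ → Fin n → ℝ) (hα : ∀ t i, α t i ∈ Set.Icc (0 : ℝ) 1)
    (N : ℕ → Fin n → Finset (Fin n))
    (hN : ∀ t i, N t i = Finset.univ.filter (fun j => ‖x t i - x t j‖ ≤ ε))
    (hupd : ∀ t i, x (t + 1) i
      = α t i • x t i + ((1 - α t i) / ((N t i).card : ℝ)) • ∑ j ∈ N t i, x t j)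
    (t : ℕ) (htriv : ∀ i j, ‖x t i - x t j‖ ≤ ε) :
    (⨆ i : Fin n, ⨆ j : Fin n, ‖x (t + 1) i - x (t + 1) j‖)
      ≤ (⨆ i : Fin n, ⨆ j : Fin n, ⨆ _ : α t j ≤ α t i,
            (α t i - (α t i - α t j) / (n : ℝ)))
        * (⨆ i : Fin n, ⨆ j : Fin n, ‖x t i - x t j‖) := by
  by_cases hn : n = 0
  · subst hn
    haveI : IsEmpty (Fin 0) := inferInstance
    simp [iSup_of_empty', Real.sSup_empty]
  haveI : Nonempty (Fin n) := Fin.pos_iff_nonempty.mp (Nat.pos_of_ne_zero hn)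
  have hm : (n : ℝ) ≠ 0 := Nat.cast_ne_zero.mpr hn
  set D := ⨆ i : Fin n, ⨆ j : Fin n, ‖x t i - x t j‖ with hDdef
  set β := ⨆ i : Fin n, ⨆ j : Fin n, ⨆ _ : α t j ≤ α t i,
      (α t i - (α t i - α t j) / (n : ℝ)) with hβdef
  have hD : ∀ i j, ‖x t i - x t j‖ ≤ D := by
    intro i j
    have h1 : ‖x t i - x t j‖ ≤ ⨆ j, ‖x t i - x t j‖ :=
      le_ciSup (f := fun j => ‖x t i - x t j‖) (Finite.bddAbove_range _) j
    have h2 : (⨆ j, ‖x t i - x t j‖) ≤ D :=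
      le_ciSup (f := fun i => ⨆ j, ‖x t i - x t j‖) (Finite.bddAbove_range _) i
    exact h1.trans h2
  have hD0 : 0 ≤ D := by
    have := hD (Classical.arbitrary (Fin n)) (Classical.arbitrary (Fin n))
    simpa using this
  have hβ : ∀ i j, α t j ≤ α t i → (α t i - (α t i - α t j) / (n : ℝ)) ≤ β := by
    intro i j hij
    have h1 : (α t i - (α t i - α t j) / (n : ℝ))
        ≤ ⨆ _ : α t j ≤ α t i, (α t i - (α t i - α t j) / (n : ℝ)) := by
      refine le_ciSup (f := fun _ : α t j ≤ α t i =>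
        (α t i - (α t i - α t j) / (n : ℝ))) ?_ hij
      exact ⟨_, by rintro y ⟨_, rfl⟩; exact le_rfl⟩
    have h2 : (⨆ _ : α t j ≤ α t i, (α t i - (α t i - α t j) / (n : ℝ)))
        ≤ ⨆ j, ⨆ _ : α t j ≤ α t i, (α t i - (α t i - α t j) / (n : ℝ)) :=
      le_ciSup (f := fun j => ⨆ _ : α t j ≤ α t i,
        (α t i - (α t i - α t j) / (n : ℝ))) (Finite.bddAbove_range _) j
    have h3 : (⨆ j, ⨆ _ : α t j ≤ α t i, (α t i - (α t i - α t j) / (n : ℝ))) ≤ β :=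
      le_ciSup (f := fun i => ⨆ j, ⨆ _ : α t j ≤ α t i,
        (α t i - (α t i - α t j) / (n : ℝ))) (Finite.bddAbove_range _) i
    exact h1.trans (h2.trans h3)
  have hβmax : ∀ i, α t i ≤ β := by
    intro i
    have := hβ i i le_rfl
    simpa using this
  have hNuniv : ∀ i, N t i = Finset.univ := by
    intro i
    rw [hN]
    exact Finset.filter_true_of_mem fun j _ => htriv i j
  have hx : ∀ i, x (t + 1) i
      = α t i • x t i + ((1 - α t i) / (n : ℝ)) • ∑ k : Fin n, x t k := by
    intro i
    rw [hupd t i, hNuniv i, Finset.card_univ, Fintype.card_fin]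
  have hsum : ∀ i, (n : ℝ) • x t i - ∑ k : Fin n, x t k
      = ∑ k : Fin n, (x t i - x t k) := by
    intro i
    rw [Finset.sum_sub_distrib, Finset.sum_const, Finset.card_univ, Fintype.card_fin]
    congr 1
    exact (Nat.cast_smul_eq_nsmul ℝ n (x t i))
  have key : ∀ i j, α t j ≤ α t i → ‖x (t + 1) i - x (t + 1) j‖ ≤ α t i * D := by
    intro i j hij
    have hid : x (t + 1) i - x (t + 1) j
        = α t j • (x t i - x t j)
          + ((α t i - α t j) / (n : ℝ)) • ((n : ℝ) • x t i - ∑ k : Fin n, x t k) := by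
      rw [hx i, hx j]
      match_scalars <;> field_simp <;> ring
    have hcoef0 : 0 ≤ (α t i - α t j) / (n : ℝ) := by
      apply div_nonneg (by linarith) (by positivity)
    have hα0 : 0 ≤ α t j := (hα t j).1
    have hsumle : ∑ k : Fin n, ‖x t i - x t k‖ ≤ (n : ℝ) * D := by
      have h := Finset.sum_le_card_nsmul Finset.univ (fun k => ‖x t i - x t k‖) D
        (fun k _ => hD i k)
      simpa [Finset.card_univ, nsmul_eq_mul] using h
    calc ‖x (t + 1) i - x (t + 1) j‖
        ≤ ‖α t j • (x t i - x t j)‖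
          + ‖((α t i - α t j) / (n : ℝ)) • ((n : ℝ) • x t i - ∑ k : Fin n, x t k)‖ := by
          rw [hid]; exact norm_add_le _ _
      _ = α t j * ‖x t i - x t j‖
          + ((α t i - α t j) / (n : ℝ)) * ‖∑ k : Fin n, (x t i - x t k)‖ := by
          rw [hsum, norm_smul, norm_smul, Real.norm_of_nonneg hα0,
            Real.norm_of_nonneg hcoef0]
      _ ≤ α t j * D + ((α t i - α t j) / (n : ℝ)) * ((n : ℝ) * D) := by
          gcongr
          · exact hD i j
          · exact (norm_sum_le _ _).trans hsumle
      _ = α t i * D := by field_simp; ring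
  have main : ∀ i j, ‖x (t + 1) i - x (t + 1) j‖ ≤ β * D := by
    intro i j
    rcases le_total (α t j) (α t i) with h | h
    · exact (key i j h).trans (mul_le_mul_of_nonneg_right (hβmax i) hD0)
    · rw [norm_sub_rev]
      exact (key j i h).trans (mul_le_mul_of_nonneg_right (hβmax j) hD0)
  exact ciSup_le fun i => ciSup_le fun j => main i j
end

section
/- In the ε-trivial mixed HK model (all agents are mutual neighbors at some time t and hence at all later times), if limsup_{t→∞} β_t < 1, where β_t = max_{i,j : αᵢ(t) ≥ αⱼ(t)} ( αᵢ(t) - (αᵢ(t) - αⱼ(t))/n ), then max_{i,j} ‖xᵢ(t) - xⱼ(t)‖ → 0 as t → ∞, i.e., a consensus is reached asymptotically. -/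
open Filter

/-- Key contraction estimate for one pair of agents under a trivial
configuration (all agents are mutual neighbors). -/
lemma mixedHK_key {E : Type*} [NormedAddCommGroup E] [NormedSpace ℝ E]
    (n : ℕ) (hn : 0 < n) (x : Fin n → E) (a : Fin n → ℝ)
    (ha : ∀ i, a i ∈ Set.Icc (0:ℝ) 1)
    (i j : Fin n) (hji : a j ≤ a i) (D : ℝ) (hD : ∀ i j, ‖x i - x j‖ ≤ D) :
    ‖(a i • x i + ((1 - a i)/(n:ℝ)) • ∑ k, x k)
      - (a j • x j + ((1 - a j)/(n:ℝ)) • ∑ k, x k)‖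
      ≤ (a i - (a i - a j)/(n:ℝ)) * D := by
  have hn' : (n:ℝ) ≠ 0 := Nat.cast_ne_zero.mpr hn.ne'
  have hD0 : 0 ≤ D := le_trans (norm_nonneg _) (hD i i)
  have hij0 : (0:ℝ) ≤ (a i - a j)/(n:ℝ) :=
    div_nonneg (sub_nonneg.mpr hji) (Nat.cast_nonneg n)
  have hsum : ∑ k : Fin n, (x i - x k) = (n:ℝ) • x i - ∑ k, x k := by
    rw [Finset.sum_sub_distrib, Finset.sum_const, Finset.card_univ, Fintype.card_fin,
      ← Nat.cast_smul_eq_nsmul ℝ]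
  have heq : (a i • x i + ((1 - a i)/(n:ℝ)) • ∑ k, x k)
      - (a j • x j + ((1 - a j)/(n:ℝ)) • ∑ k, x k)
      = a j • (x i - x j) + ((a i - a j)/(n:ℝ)) • ∑ k : Fin n, (x i - x k) := by
    rw [hsum]
    match_scalars <;> field_simp <;> ring
  rw [heq]
  have h1 : ‖a j • (x i - x j)‖ ≤ a j * D := by
    rw [norm_smul, Real.norm_eq_abs, abs_of_nonneg (ha j).1]
    exact mul_le_mul_of_nonneg_left (hD i j) (ha j).1
  have h2 : ‖∑ k : Fin n, (x i - x k)‖ ≤ ((n:ℝ) - 1) * D := by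
    calc ‖∑ k : Fin n, (x i - x k)‖ ≤ ∑ k : Fin n, ‖x i - x k‖ := norm_sum_le _ _
    _ = ∑ k ∈ Finset.univ.erase i, ‖x i - x k‖ := by
        rw [← Finset.add_sum_erase _ _ (Finset.mem_univ i), sub_self, norm_zero, zero_add]
    _ ≤ (Finset.univ.erase i).card • D := Finset.sum_le_card_nsmul _ _ D (fun k _ => hD i k)
    _ = ((n:ℝ) - 1) * D := by
        rw [Finset.card_erase_of_mem (Finset.mem_univ i), Finset.card_univ, Fintype.card_fin,
          nsmul_eq_mul, Nat.cast_sub hn, Nat.cast_one]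
  calc ‖a j • (x i - x j) + ((a i - a j)/(n:ℝ)) • ∑ k : Fin n, (x i - x k)‖
      ≤ a j * D + ((a i - a j)/(n:ℝ)) * (((n:ℝ) - 1) * D) := by
        refine le_trans (norm_add_le _ _) (add_le_add h1 ?_)
        rw [norm_smul, Real.norm_eq_abs, abs_of_nonneg hij0]
        exact mul_le_mul_of_nonneg_left h2 hij0
    _ = (a i - (a i - a j)/(n:ℝ)) * D := by field_simp; ring

/-- Theorem 1: in the mixed HK model, if the configuration is ε-trivial at some
time `t₀` and `limsup β t < 1`, then the maximal pairwise distance tends to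
zero, i.e., a consensus is reached asymptotically. -/
theorem mixedHK_consensus_of_limsup_lt_one (n d : ℕ) (ε : ℝ) (hε : 0 < ε)
    (x : ℕ → Fin n → EuclideanSpace ℝ (Fin d))
    (α : ℕ → Fin n → ℝ) (hα : ∀ t i, α t i ∈ Set.Icc (0 : ℝ) 1)
    (N : ℕ → Fin n → Finset (Fin n))
    (hN : ∀ t i, N t i = Finset.univ.filter (fun j => ‖x t i - x t j‖ ≤ ε))
    (hupd : ∀ t i, x (t + 1) i
      = α t i • x t i + ((1 - α t i) / ((N t i).card : ℝ)) • ∑ j ∈ N t i, x t j)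
    (β : ℕ → ℝ)
    (hβ : ∀ t, β t = ⨆ i : Fin n, ⨆ j : Fin n, ⨆ _ : α t j ≤ α t i,
            (α t i - (α t i - α t j) / (n : ℝ)))
    (hlimsup : limsup β atTop < 1)
    (t₀ : ℕ) (htriv : ∀ i j, ‖x t₀ i - x t₀ j‖ ≤ ε) :
    Tendsto (fun t => ⨆ i : Fin n, ⨆ j : Fin n, ‖x t i - x t j‖) atTop (nhds 0) := by
  rcases Nat.eq_zero_or_pos n with hn | hn
  · subst hn
    simp only [Real.iSup_of_isEmpty]
    exact tendsto_const_nhds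
  haveI : Nonempty (Fin n) := Fin.pos_iff_nonempty.mp hn
  set D : ℕ → ℝ := fun t => ⨆ i : Fin n, ⨆ j : Fin n, ‖x t i - x t j‖ with hDdef
  -- basic facts about D
  have hDle : ∀ t i j, ‖x t i - x t j‖ ≤ D t := by
    intro t i j
    have h1 : ‖x t i - x t j‖ ≤ ⨆ j, ‖x t i - x t j‖ :=
      le_ciSup (f := fun j => ‖x t i - x t j‖) (Finite.bddAbove_range _) j
    have h2 : (⨆ j, ‖x t i - x t j‖) ≤ ⨆ i, ⨆ j, ‖x t i - x t j‖ :=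
      le_ciSup (f := fun i => ⨆ j, ‖x t i - x t j‖) (Finite.bddAbove_range _) i
    exact le_trans h1 h2
  have hD0 : ∀ t, 0 ≤ D t := by
    intro t
    have := hDle t (Classical.arbitrary (Fin n)) (Classical.arbitrary (Fin n))
    simpa using this
  have hDub : ∀ t c, (∀ i j, ‖x t i - x t j‖ ≤ c) → D t ≤ c := by
    intro t c h
    exact ciSup_le fun i => ciSup_le fun j => h i j
  -- basic facts about β
  have hβge : ∀ t i j, α t j ≤ α t i → α t i - (α t i - α t j)/(n:ℝ) ≤ β t := by
    intro t i j hji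
    rw [hβ]
    refine le_trans ?_ (le_ciSup (Finite.bddAbove_range _) i)
    refine le_trans ?_ (le_ciSup (Finite.bddAbove_range
      (fun j => ⨆ _ : α t j ≤ α t i, (α t i - (α t i - α t j) / (n : ℝ)))) j)
    exact ge_of_eq (ciSup_pos (f := fun _ => α t i - (α t i - α t j) / (n:ℝ)) hji)
  have hβ1 : ∀ t, β t ≤ 1 := by
    intro t
    rw [hβ]
    refine Real.iSup_le (fun i => Real.iSup_le (fun j => Real.iSup_le (fun hji => ?_)
      zero_le_one) zero_le_one) zero_le_one
    have h1 := (hα t i).2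
    have h2 : (0:ℝ) ≤ (α t i - α t j)/(n:ℝ) :=
      div_nonneg (sub_nonneg.mpr hji) (Nat.cast_nonneg n)
    linarith
  have hβ0 : ∀ t, 0 ≤ β t := by
    intro t
    have i0 := Classical.arbitrary (Fin n)
    have := hβge t i0 i0 le_rfl
    have h0 := (hα t i0).1
    simp only [sub_self, zero_div] at this
    linarith
  -- one-step contraction under triviality
  have hstep : ∀ t, (∀ i j, ‖x t i - x t j‖ ≤ ε) →
      ∀ i j, ‖x (t+1) i - x (t+1) j‖ ≤ β t * D t := by
    intro t ht i j
    have hNt : ∀ i, N t i = Finset.univ := fun i => by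
      rw [hN]; exact Finset.filter_true_of_mem (fun j _ => ht i j)
    have hxu : ∀ i, x (t+1) i
        = α t i • x t i + ((1 - α t i)/(n:ℝ)) • ∑ k, x t k := by
      intro i
      rw [hupd t i, hNt i, Finset.card_univ, Fintype.card_fin]
    rw [hxu i, hxu j]
    rcases le_total (α t j) (α t i) with h | h
    · exact le_trans (mixedHK_key n hn (x t) (α t) (hα t) i j h (D t) (hDle t))
        (mul_le_mul_of_nonneg_right (hβge t i j h) (hD0 t))
    · rw [norm_sub_rev]
      exact le_trans (mixedHK_key n hn (x t) (α t) (hα t) j i h (D t) (hDle t))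
        (mul_le_mul_of_nonneg_right (hβge t j i h) (hD0 t))
  -- triviality propagates
  have htriv_step : ∀ t, (∀ i j, ‖x t i - x t j‖ ≤ ε) →
      ∀ i j, ‖x (t+1) i - x (t+1) j‖ ≤ ε := by
    intro t ht i j
    calc ‖x (t+1) i - x (t+1) j‖ ≤ β t * D t := hstep t ht i j
      _ ≤ 1 * ε := mul_le_mul (hβ1 t) (hDub t ε ht) (hD0 t) zero_le_one
      _ = ε := one_mul ε
  have htrivall : ∀ t, t₀ ≤ t → ∀ i j, ‖x t i - x t j‖ ≤ ε := by
    have H : ∀ s, ∀ i j, ‖x (t₀ + s) i - x (t₀ + s) j‖ ≤ ε := by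
      intro s
      induction s with
      | zero => simpa using htriv
      | succ s ih => exact fun i j => htriv_step (t₀ + s) ih i j
    intro t ht
    obtain ⟨s, rfl⟩ := Nat.exists_eq_add_of_le ht
    exact H s
  -- eventual uniform contraction factor
  set c : ℝ := (limsup β atTop + 1)/2 with hc
  have hlc : limsup β atTop < c := by rw [hc]; linarith
  have hc1 : c < 1 := by rw [hc]; linarith
  have hev : ∀ᶠ t in atTop, β t < c :=
    eventually_lt_of_limsup_lt hlc (isBoundedUnder_of ⟨1, fun t => hβ1 t⟩)
  obtain ⟨T, hT⟩ := eventually_atTop.mp hev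
  set r : ℝ := max c 0 with hr
  have hr0 : 0 ≤ r := le_max_right _ _
  have hr1 : r < 1 := max_lt hc1 one_pos
  set T' : ℕ := max T t₀ with hT'
  have hD1 : ∀ t, T' ≤ t → D (t+1) ≤ r * D t := by
    intro t ht
    have htriv' := htrivall t (le_trans (le_max_right T t₀) ht)
    refine hDub (t+1) _ fun i j => le_trans (hstep t htriv' i j) ?_
    have hβr : β t ≤ r := le_trans (hT t (le_trans (le_max_left T t₀) ht)).le (le_max_left _ _)
    exact mul_le_mul_of_nonneg_right hβr (hD0 t)
  have hgeo : ∀ s, D (T' + s) ≤ r ^ s * D T' := by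
    intro s
    induction s with
    | zero => simp
    | succ s ih =>
      calc D (T' + (s+1)) = D ((T' + s) + 1) := by ring_nf
        _ ≤ r * D (T' + s) := hD1 (T' + s) (Nat.le_add_right _ _)
        _ ≤ r * (r ^ s * D T') := mul_le_mul_of_nonneg_left ih hr0
        _ = r ^ (s+1) * D T' := by ring
  -- squeeze
  refine squeeze_zero' (f := fun t => D t) (g := fun t => r ^ (t - T') * D T')
    (Eventually.of_forall hD0) ?_ ?_
  · filter_upwards [eventually_ge_atTop T'] with t ht
    have := hgeo (t - T')
    rwa [Nat.add_sub_cancel' ht] at this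
  · have h1 : Tendsto (fun t : ℕ => r ^ (t - T')) atTop (nhds 0) :=
      (tendsto_pow_atTop_nhds_zero_of_lt_one hr0 hr1).comp (tendsto_sub_atTop_nat T')
    simpa using h1.mul_const (D T')
end

section
/- In the mixed HK model, the quantity Z(t) = Σ_{i,j ∈ [n]} min(‖xᵢ(t) - xⱼ(t)‖², ε²) is nonincreasing in t. Moreover, Z(t) - Z(t+1) ≥ 4 Σ_{i=1}^n (1 + |Nᵢ(t)| · (αᵢ(t)/(1-αᵢ(t))) · 1{αᵢ(t) < 1}) ‖xᵢ(t) - xᵢ(t+1)‖². -/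
open Finset

/-- One-step energy decrease for the mixed HK model. -/
theorem mixedHK_aux (n d : ℕ) (ε : ℝ) (hε : 0 < ε)
    (y z : Fin n → EuclideanSpace ℝ (Fin d))
    (a : Fin n → ℝ) (ha : ∀ i, a i ∈ Set.Icc (0 : ℝ) 1)
    (M : Fin n → Finset (Fin n))
    (hM : ∀ i, M i = Finset.univ.filter (fun j => ‖y i - y j‖ ≤ ε))
    (hupd : ∀ i, z i = a i • y i + ((1 - a i) / ((M i).card : ℝ)) • ∑ j ∈ M i, y j) :
    4 * ∑ i : Fin n,
        (1 + (if a i < 1 then ((M i).card : ℝ) * (a i / (1 - a i)) else 0)) * ‖y i - z i‖ ^ 2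
      ≤ (∑ i : Fin n, ∑ j : Fin n, min (‖y i - y j‖ ^ 2) (ε ^ 2))
        - (∑ i : Fin n, ∑ j : Fin n, min (‖z i - z j‖ ^ 2) (ε ^ 2)) := by
  classical
  set v : Fin n → EuclideanSpace ℝ (Fin d) := fun i => y i - z i with hv
  set s : Fin n → EuclideanSpace ℝ (Fin d) := fun i => ∑ j ∈ M i, (y i - y j) with hs
  set w : Fin n → ℝ :=
    fun i => 1 + (if a i < 1 then ((M i).card : ℝ) * (a i / (1 - a i)) else 0) with hw
  have hself : ∀ i, i ∈ M i := by
    intro i; rw [hM]; simp [hε.le]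
  have hcard1 : ∀ i, 1 ≤ (M i).card := fun i => Finset.card_pos.2 ⟨i, hself i⟩
  have hcard : ∀ i, (0 : ℝ) < ((M i).card : ℝ) := by
    intro i; exact_mod_cast Finset.card_pos.2 ⟨i, hself i⟩
  have hsymm : ∀ i j, j ∈ M i ↔ i ∈ M j := by
    intro i j; rw [hM, hM]; simp [norm_sub_rev]
  -- general swap lemma for symmetric neighborhoods
  have hswapG : ∀ (M' : Fin n → Finset (Fin n)), (∀ i j, j ∈ M' i ↔ i ∈ M' j) →
      ∀ f : Fin n → Fin n → ℝ,
        (∑ i : Fin n, ∑ j ∈ M' i, f i j) = ∑ j : Fin n, ∑ i ∈ M' j, f i j := by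
    intro M' hM' f
    have h1 : ∀ (g : Fin n → Fin n → ℝ) i,
        (∑ j : Fin n, if j ∈ M' i then g i j else 0) = ∑ j ∈ M' i, g i j := by
      intro g i
      rw [Finset.sum_ite_mem, Finset.univ_inter]
    calc (∑ i : Fin n, ∑ j ∈ M' i, f i j)
        = ∑ i : Fin n, ∑ j : Fin n, if j ∈ M' i then f i j else 0 :=
          Finset.sum_congr rfl fun i _ => (h1 f i).symm
      _ = ∑ j : Fin n, ∑ i : Fin n, if j ∈ M' i then f i j else 0 := Finset.sum_comm
      _ = ∑ j : Fin n, ∑ i : Fin n, if i ∈ M' j then f i j else 0 := by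
          refine Finset.sum_congr rfl fun j _ => Finset.sum_congr rfl fun i _ => ?_
          simp only [hM' i j]
      _ = ∑ j : Fin n, ∑ i ∈ M' j, f i j :=
          Finset.sum_congr rfl fun j _ => h1 (fun p q => f q p) j
  have hsymmE : ∀ i j, j ∈ (M i).erase i ↔ i ∈ (M j).erase j := by
    intro i j
    simp only [Finset.mem_erase]
    constructor
    · rintro ⟨h1, h2⟩; exact ⟨fun h => h1 h.symm, (hsymm i j).1 h2⟩
    · rintro ⟨h1, h2⟩; exact ⟨fun h => h1 h.symm, (hsymm i j).2 h2⟩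
  have hswapM := hswapG M hsymm
  have hswapE := hswapG (fun i => (M i).erase i) hsymmE
  -- v in terms of s
  have hvs : ∀ i, v i = ((1 - a i) / ((M i).card : ℝ)) • s i := by
    intro i
    have hc0 : ((M i).card : ℝ) ≠ 0 := ne_of_gt (hcard i)
    have hsum : s i = ((M i).card : ℝ) • y i - ∑ j ∈ M i, y j := by
      simp only [hs, Finset.sum_sub_distrib, Finset.sum_const]
      congr 1
      exact (Nat.cast_smul_eq_nsmul ℝ _ _).symm
    show y i - z i = _
    rw [hupd i, hsum, smul_sub, smul_smul, div_mul_cancel₀ _ hc0, sub_smul, one_smul]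
    abel
  -- inner product identity
  have hinner : ∀ i, (inner ℝ (v i) (s i) : ℝ)
      = ((((M i).card : ℝ) - 1) + w i) * ‖v i‖ ^ 2 := by
    intro i
    rcases lt_or_ge (a i) 1 with h1 | h1
    · have h10 : (1 : ℝ) - a i ≠ 0 := by linarith
      have hc0 : ((M i).card : ℝ) ≠ 0 := ne_of_gt (hcard i)
      have hsv : s i = (((M i).card : ℝ) / (1 - a i)) • v i := by
        rw [hvs i, smul_smul,
          show ((M i).card : ℝ) / (1 - a i) * ((1 - a i) / ((M i).card : ℝ)) = 1 by
            field_simp, one_smul]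
      rw [hsv, real_inner_smul_right, real_inner_self_eq_norm_sq]
      have hwi : w i = 1 + ((M i).card : ℝ) * (a i / (1 - a i)) := by
        rw [hw]; simp [h1]
      rw [hwi]
      have : ((M i).card : ℝ) / (1 - a i)
          = (((M i).card : ℝ) - 1) + (1 + ((M i).card : ℝ) * (a i / (1 - a i))) := by
        field_simp
        ring
      rw [this]
    · have h11 : a i = 1 := le_antisymm (ha i).2 h1
      have hv0 : v i = 0 := by
        rw [hvs i, h11]; simp
      rw [hv0]
      simp
  -- Step A : restrict to neighbor pairs
  have stepA : (∑ i : Fin n, ∑ j ∈ M i, (‖y i - y j‖ ^ 2 - ‖z i - z j‖ ^ 2))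
      ≤ (∑ i : Fin n, ∑ j : Fin n, min (‖y i - y j‖ ^ 2) (ε ^ 2))
        - (∑ i : Fin n, ∑ j : Fin n, min (‖z i - z j‖ ^ 2) (ε ^ 2)) := by
    rw [← Finset.sum_sub_distrib]
    refine Finset.sum_le_sum fun i _ => ?_
    rw [← Finset.sum_sub_distrib,
      show (∑ j ∈ M i, (‖y i - y j‖ ^ 2 - ‖z i - z j‖ ^ 2))
        = ∑ j : Fin n, if j ∈ M i then (‖y i - y j‖ ^ 2 - ‖z i - z j‖ ^ 2) else 0 by
        rw [Finset.sum_ite_mem, Finset.univ_inter]]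
    refine Finset.sum_le_sum fun j _ => ?_
    by_cases hj : j ∈ M i
    · rw [if_pos hj]
      have hle : ‖y i - y j‖ ≤ ε := by
        rw [hM] at hj; simpa using hj
      have h1 : min (‖y i - y j‖ ^ 2) (ε ^ 2) = ‖y i - y j‖ ^ 2 :=
        min_eq_left (by nlinarith [norm_nonneg (y i - y j)])
      have h2 : min (‖z i - z j‖ ^ 2) (ε ^ 2) ≤ ‖z i - z j‖ ^ 2 := min_le_left _ _
      rw [h1]; linarith
    · rw [if_neg hj]
      have hgt : ε < ‖y i - y j‖ := by
        by_contra h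
        exact hj (by rw [hM]; simp [not_lt.mp h])
      have h1 : min (‖y i - y j‖ ^ 2) (ε ^ 2) = ε ^ 2 :=
        min_eq_right (by nlinarith)
      have h2 : min (‖z i - z j‖ ^ 2) (ε ^ 2) ≤ ε ^ 2 := min_le_right _ _
      rw [h1]; linarith
  -- Step B : expand the squared norms
  have expand : ∀ i j, ‖y i - y j‖ ^ 2 - ‖z i - z j‖ ^ 2
      = 2 * (inner ℝ (y i - y j) (v i - v j) : ℝ) - ‖v i - v j‖ ^ 2 := by
    intro i j
    have hz : z i - z j = (y i - y j) - (v i - v j) := by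
      show z i - z j = (y i - y j) - ((y i - z i) - (y j - z j))
      abel
    rw [hz, norm_sub_sq_real (y i - y j) (v i - v j)]
    ring
  have hT1 : ∀ i, (∑ j ∈ M i, (inner ℝ (y i - y j) (v i) : ℝ)) = inner ℝ (v i) (s i) := by
    intro i
    rw [real_inner_comm, hs]
    exact (sum_inner _ _ _).symm
  have hT2 : (∑ i : Fin n, ∑ j ∈ M i, (inner ℝ (y i - y j) (v j) : ℝ))
      = - ∑ i : Fin n, (inner ℝ (v i) (s i) : ℝ) := by
    rw [hswapM (fun i j => (inner ℝ (y i - y j) (v j) : ℝ)), ← Finset.sum_neg_distrib]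
    refine Finset.sum_congr rfl fun j _ => ?_
    have e : ∀ i, (inner ℝ (y i - y j) (v j) : ℝ) = -(inner ℝ (y j - y i) (v j) : ℝ) := by
      intro i
      rw [← inner_neg_left, neg_sub]
    rw [Finset.sum_congr rfl fun i _ => e i, Finset.sum_neg_distrib, hT1 j]
  have stepB : (∑ i : Fin n, ∑ j ∈ M i, (‖y i - y j‖ ^ 2 - ‖z i - z j‖ ^ 2))
      = 4 * (∑ i : Fin n, (inner ℝ (v i) (s i) : ℝ))
        - ∑ i : Fin n, ∑ j ∈ M i, ‖v i - v j‖ ^ 2 := by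
    have h1 : ∀ i, (∑ j ∈ M i, (‖y i - y j‖ ^ 2 - ‖z i - z j‖ ^ 2))
        = 2 * ((inner ℝ (v i) (s i) : ℝ) - ∑ j ∈ M i, (inner ℝ (y i - y j) (v j) : ℝ))
          - ∑ j ∈ M i, ‖v i - v j‖ ^ 2 := by
      intro i
      have e : ∀ j, ‖y i - y j‖ ^ 2 - ‖z i - z j‖ ^ 2
          = 2 * ((inner ℝ (y i - y j) (v i) : ℝ) - (inner ℝ (y i - y j) (v j) : ℝ))
            - ‖v i - v j‖ ^ 2 := by
        intro j
        rw [expand i j, inner_sub_right]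
      rw [Finset.sum_congr rfl fun j _ => e j, Finset.sum_sub_distrib, ← Finset.mul_sum,
        Finset.sum_sub_distrib, hT1]
    rw [Finset.sum_congr rfl fun i _ => h1 i, Finset.sum_sub_distrib, ← Finset.mul_sum,
      Finset.sum_sub_distrib, hT2]
    ring
  -- Step E : bound the cross term
  have stepE : (∑ i : Fin n, ∑ j ∈ M i, ‖v i - v j‖ ^ 2)
      ≤ 4 * ∑ i : Fin n, (((M i).card : ℝ) - 1) * ‖v i‖ ^ 2 := by
    have h1 : ∀ i, (∑ j ∈ M i, ‖v i - v j‖ ^ 2)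
        ≤ 2 * ((((M i).card : ℝ) - 1) * ‖v i‖ ^ 2) + 2 * ∑ j ∈ (M i).erase i, ‖v j‖ ^ 2 := by
      intro i
      rw [← Finset.add_sum_erase _ _ (hself i), sub_self, norm_zero]
      have h2 : (∑ j ∈ (M i).erase i, ‖v i - v j‖ ^ 2)
          ≤ ∑ j ∈ (M i).erase i, (2 * ‖v i‖ ^ 2 + 2 * ‖v j‖ ^ 2) :=
        Finset.sum_le_sum fun j _ => by
          have h := norm_sub_le (v i) (v j)
          have h2 : ‖v i - v j‖ ^ 2 ≤ (‖v i‖ + ‖v j‖) ^ 2 :=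
            pow_le_pow_left₀ (norm_nonneg _) h 2
          nlinarith [sq_nonneg (‖v i‖ - ‖v j‖)]
      rw [Finset.sum_add_distrib, Finset.sum_const, Finset.card_erase_of_mem (hself i),
        nsmul_eq_mul, Nat.cast_sub (hcard1 i), ← Finset.mul_sum] at h2
      push_cast at h2 ⊢
      nlinarith [h2]
    have h3 : (∑ i : Fin n, ∑ j ∈ (M i).erase i, ‖v j‖ ^ 2)
        = ∑ j : Fin n, (((M j).card : ℝ) - 1) * ‖v j‖ ^ 2 := by
      rw [hswapE (fun i j => ‖v j‖ ^ 2)]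
      refine Finset.sum_congr rfl fun j _ => ?_
      rw [Finset.sum_const, Finset.card_erase_of_mem (hself j), nsmul_eq_mul,
        Nat.cast_sub (hcard1 j)]
      push_cast
      ring
    calc (∑ i : Fin n, ∑ j ∈ M i, ‖v i - v j‖ ^ 2)
        ≤ ∑ i : Fin n, (2 * ((((M i).card : ℝ) - 1) * ‖v i‖ ^ 2)
            + 2 * ∑ j ∈ (M i).erase i, ‖v j‖ ^ 2) := Finset.sum_le_sum fun i _ => h1 i
      _ = 2 * (∑ i : Fin n, (((M i).card : ℝ) - 1) * ‖v i‖ ^ 2)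
            + 2 * ∑ i : Fin n, ∑ j ∈ (M i).erase i, ‖v j‖ ^ 2 := by
          rw [Finset.sum_add_distrib, ← Finset.mul_sum, ← Finset.mul_sum]
      _ = 4 * ∑ i : Fin n, (((M i).card : ℝ) - 1) * ‖v i‖ ^ 2 := by
          rw [h3]; ring
  -- assemble
  have hsuminner : (∑ i : Fin n, (inner ℝ (v i) (s i) : ℝ))
      = ∑ i : Fin n, ((((M i).card : ℝ) - 1) + w i) * ‖v i‖ ^ 2 :=
    Finset.sum_congr rfl fun i _ => hinner i
  have hfin : (∑ i : Fin n, ((((M i).card : ℝ) - 1) + w i) * ‖v i‖ ^ 2)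
      - (∑ i : Fin n, (((M i).card : ℝ) - 1) * ‖v i‖ ^ 2)
      = ∑ i : Fin n, w i * ‖v i‖ ^ 2 := by
    rw [← Finset.sum_sub_distrib]
    exact Finset.sum_congr rfl fun i _ => by ring
  have H : 4 * ∑ i : Fin n, w i * ‖v i‖ ^ 2
      ≤ (∑ i : Fin n, ∑ j : Fin n, min (‖y i - y j‖ ^ 2) (ε ^ 2))
        - (∑ i : Fin n, ∑ j : Fin n, min (‖z i - z j‖ ^ 2) (ε ^ 2)) := by
    have := stepA
    rw [stepB, hsuminner] at this
    linarith [stepE, hfin, this]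
  simpa only [hw, hv] using H

/-- Lemma 8: `Z(t) = Σ_{i,j} min(‖xᵢ(t) - xⱼ(t)‖², ε²)` is nonincreasing, and
`Z(t) - Z(t+1)` dominates four times the weighted total squared displacement. -/
theorem mixedHK_energy_decreasing (n d : ℕ) (ε : ℝ) (hε : 0 < ε)
    (x : ℕ → Fin n → EuclideanSpace ℝ (Fin d))
    (α : ℕ → Fin n → ℝ) (hα : ∀ t i, α t i ∈ Set.Icc (0 : ℝ) 1)
    (N : ℕ → Fin n → Finset (Fin n))
    (hN : ∀ t i, N t i = Finset.univ.filter (fun j => ‖x t i - x t j‖ ≤ ε))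
    (hupd : ∀ t i, x (t + 1) i
      = α t i • x t i + ((1 - α t i) / ((N t i).card : ℝ)) • ∑ j ∈ N t i, x t j)
    (Z : ℕ → ℝ)
    (hZ : ∀ t, Z t = ∑ i : Fin n, ∑ j : Fin n, min (‖x t i - x t j‖ ^ 2) (ε ^ 2)) :
    ∀ t, Z (t + 1) ≤ Z t ∧
      4 * ∑ i : Fin n,
          (1 + (if α t i < 1 then ((N t i).card : ℝ) * (α t i / (1 - α t i)) else 0))
            * ‖x t i - x (t + 1) i‖ ^ 2
        ≤ Z t - Z (t + 1) := by
  intro t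
  have key := mixedHK_aux n d ε hε (x t) (x (t + 1)) (α t) (fun i => hα t i) (N t)
    (fun i => hN t i) (fun i => hupd t i)
  have hnonneg : 0 ≤ ∑ i : Fin n,
      (1 + (if α t i < 1 then ((N t i).card : ℝ) * (α t i / (1 - α t i)) else 0))
        * ‖x t i - x (t + 1) i‖ ^ 2 := by
    refine Finset.sum_nonneg fun i _ => ?_
    have h2 : 0 ≤ (if α t i < 1 then ((N t i).card : ℝ) * (α t i / (1 - α t i)) else 0) := by
      split_ifs with h
      · exact mul_nonneg (Nat.cast_nonneg _) (div_nonneg (hα t i).1 (by linarith))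
      · exact le_refl 0
    exact mul_nonneg (by linarith) (sq_nonneg _)
  rw [hZ t, hZ (t + 1)]
  constructor
  · linarith [key, hnonneg]
  · exact key
end

section
/- In the mixed HK model with αᵢ(t) ∈ [0,1], for all m ≥ 1 one has 4 Σ_{t=0}^{m-1} Σ_{i=1}^n ‖xᵢ(t) - xᵢ(t+1)‖² < n² ε², i.e., the total squared displacement over all time is bounded by n²ε²/4. -/
open Finset

section aux

variable {n d : ℕ}

private lemma hk_swap (Nb : Fin n → Finset (Fin n))
    (hs : ∀ i j, j ∈ Nb i ↔ i ∈ Nb j) (f : Fin n → Fin n → ℝ) :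
    ∑ i, ∑ j ∈ Nb i, f i j = ∑ i, ∑ j ∈ Nb i, f j i := by
  rw [Finset.sum_comm' (s := Finset.univ) (t := fun i => Nb i)
    (t' := Finset.univ) (s' := fun j => Nb j)
    (fun i j => by simp [hs i j])]

/-- Core energy-decrease inequality over the fixed communication graph. -/
private lemma hk_core (ε : ℝ) (hε : 0 < ε)
    (a b : Fin n → EuclideanSpace ℝ (Fin d)) (A : Fin n → ℝ)
    (hA : ∀ i, A i ∈ Set.Icc (0 : ℝ) 1) (Nb : Fin n → Finset (Fin n))
    (hNb : ∀ i, Nb i = Finset.univ.filter fun j => ‖a i - a j‖ ≤ ε)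
    (hupd : ∀ i, b i = A i • a i
      + ((1 - A i) / ((Nb i).card : ℝ)) • ∑ j ∈ Nb i, a j) :
    (∑ i, ∑ j ∈ Nb i, ‖b i - b j‖ ^ 2) + 4 * ∑ i, ‖a i - b i‖ ^ 2
      ≤ ∑ i, ∑ j ∈ Nb i, ‖a i - a j‖ ^ 2 := by
  classical
  have hmem : ∀ i, i ∈ Nb i := by
    intro i; rw [hNb]; simp [hε.le]
  have hsymm : ∀ i j, j ∈ Nb i ↔ i ∈ Nb j := by
    intro i j; rw [hNb, hNb]; simp [norm_sub_rev (a i)]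
  have hcard : ∀ i, ((Nb i).card : ℝ) ≠ 0 := by
    intro i
    exact Nat.cast_ne_zero.mpr (Finset.card_pos.mpr ⟨i, hmem i⟩).ne'
  set δ : Fin n → EuclideanSpace ℝ (Fin d) := fun i => b i - a i with hδdef
  set u : Fin n → EuclideanSpace ℝ (Fin d) :=
    fun i => (((Nb i).card : ℝ))⁻¹ • (∑ j ∈ Nb i, a j) - a i with hudef
  have hδ : ∀ i, δ i = (1 - A i) • u i := by
    intro i
    simp only [hδdef, hudef, hupd i, div_eq_mul_inv, mul_smul, smul_sub]
    module
  have hsum : ∀ i, ∑ j ∈ Nb i, (a i - a j) = -(((Nb i).card : ℝ) • u i) := by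
    intro i
    rw [Finset.sum_sub_distrib, Finset.sum_const, hudef]
    simp only [smul_sub, smul_inv_smul₀ (hcard i), Nat.cast_smul_eq_nsmul]
    abel
  -- pointwise expansion
  have hexp : ∀ i j, ‖b i - b j‖ ^ 2
      = ‖a i - a j‖ ^ 2 + 2 * inner ℝ (a i - a j) (δ i - δ j) + ‖δ i - δ j‖ ^ 2 := by
    intro i j
    have : b i - b j = (a i - a j) + (δ i - δ j) := by simp [hδdef]; abel
    rw [this, norm_add_sq_real]
  -- the inner-product (cross) term
  have hT : ∑ i, ∑ j ∈ Nb i, (inner ℝ (a i - a j) (δ i - δ j) : ℝ)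
      = -2 * ∑ i, ((Nb i).card : ℝ) * (1 - A i) * ‖u i‖ ^ 2 := by
    have h1 : ∀ i j, (inner ℝ (a i - a j) (δ i - δ j) : ℝ)
        = inner ℝ (a i - a j) (δ i) - inner ℝ (a i - a j) (δ j) := by
      intro i j; rw [inner_sub_right]
    have hswap : ∑ i, ∑ j ∈ Nb i, (inner ℝ (a i - a j) (δ j) : ℝ)
        = ∑ i, ∑ j ∈ Nb i, (inner ℝ (a j - a i) (δ i) : ℝ) :=
      hk_swap Nb hsymm _
    have h2 : ∀ i j, (inner ℝ (a j - a i) (δ i) : ℝ) = -(inner ℝ (a i - a j) (δ i) : ℝ) := by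
      intro i j
      rw [show a j - a i = -(a i - a j) by abel, inner_neg_left]
    have h3 : ∀ i, ∑ j ∈ Nb i, (inner ℝ (a i - a j) (δ i) : ℝ)
        = -(((Nb i).card : ℝ) * (1 - A i) * ‖u i‖ ^ 2) := by
      intro i
      rw [← sum_inner, hsum i, hδ i, inner_neg_left, real_inner_smul_left,
        real_inner_smul_right, real_inner_self_eq_norm_sq]
      ring
    simp only [h1, Finset.sum_sub_distrib, hswap]
    simp only [h2, Finset.sum_neg_distrib, sub_neg_eq_add, h3]
    ring
  -- bound on the quadratic (diffusion) term
  have hU : ∑ i, ∑ j ∈ Nb i, ‖δ i - δ j‖ ^ 2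
      ≤ 4 * ∑ i, (((Nb i).card : ℝ) - 1) * ‖δ i‖ ^ 2 := by
    have herase : ∀ i, ∑ j ∈ Nb i, ‖δ i - δ j‖ ^ 2
        = ∑ j ∈ (Nb i).erase i, ‖δ i - δ j‖ ^ 2 := by
      intro i
      rw [← Finset.sum_erase (Nb i) (a := i) (by simp)]
    have hesymm : ∀ i j, j ∈ (Nb i).erase i ↔ i ∈ (Nb j).erase j := by
      intro i j
      simp only [Finset.mem_erase, hsymm i j]
      constructor <;> rintro ⟨h1, h2⟩ <;> exact ⟨fun h => h1 h.symm, h2⟩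
    have hbound : ∀ i, ∑ j ∈ (Nb i).erase i, ‖δ i - δ j‖ ^ 2
        ≤ ∑ j ∈ (Nb i).erase i, (2 * ‖δ i‖ ^ 2 + 2 * ‖δ j‖ ^ 2) := by
      intro i
      refine Finset.sum_le_sum fun j _ => ?_
      have h1 := norm_sub_le (δ i) (δ j)
      have h2 : (0:ℝ) ≤ ‖δ i - δ j‖ := norm_nonneg _
      nlinarith [norm_nonneg (δ i), norm_nonneg (δ j), sq_nonneg (‖δ i‖ - ‖δ j‖)]
    calc ∑ i, ∑ j ∈ Nb i, ‖δ i - δ j‖ ^ 2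
        = ∑ i, ∑ j ∈ (Nb i).erase i, ‖δ i - δ j‖ ^ 2 := by
          simp only [herase]
      _ ≤ ∑ i, ∑ j ∈ (Nb i).erase i, (2 * ‖δ i‖ ^ 2 + 2 * ‖δ j‖ ^ 2) :=
          Finset.sum_le_sum fun i _ => hbound i
      _ = ∑ i, ((((Nb i).erase i).card : ℝ) * (2 * ‖δ i‖ ^ 2))
            + ∑ i, ∑ j ∈ (Nb i).erase i, 2 * ‖δ j‖ ^ 2 := by
          rw [← Finset.sum_add_distrib]
          refine Finset.sum_congr rfl fun i _ => ?_
          rw [Finset.sum_add_distrib, Finset.sum_const, nsmul_eq_mul]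
      _ = 4 * ∑ i, (((Nb i).card : ℝ) - 1) * ‖δ i‖ ^ 2 := by
          have hswap2 : ∑ i, ∑ j ∈ (Nb i).erase i, 2 * ‖δ j‖ ^ 2
              = ∑ i, ∑ j ∈ (Nb i).erase i, 2 * ‖δ i‖ ^ 2 :=
            hk_swap (fun i => (Nb i).erase i) hesymm _
          have hc : ∀ i, (((Nb i).erase i).card : ℝ) = ((Nb i).card : ℝ) - 1 := by
            intro i
            rw [Finset.card_erase_of_mem (hmem i)]
            have h1 := Finset.card_pos.mpr ⟨i, hmem i⟩
            push_cast [Nat.cast_sub h1]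
            ring
          rw [hswap2, Finset.mul_sum, ← Finset.sum_add_distrib]
          refine Finset.sum_congr rfl fun i _ => ?_
          rw [Finset.sum_const, nsmul_eq_mul, hc i]
          ring
  -- per-agent inequality
  have hper : ∀ i, ((Nb i).card : ℝ) * ‖δ i‖ ^ 2
      ≤ ((Nb i).card : ℝ) * (1 - A i) * ‖u i‖ ^ 2 := by
    intro i
    have hnd : ‖δ i‖ ^ 2 = (1 - A i) ^ 2 * ‖u i‖ ^ 2 := by
      rw [hδ i, norm_smul]
      have : |1 - A i| = 1 - A i := abs_of_nonneg (by linarith [(hA i).2])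
      rw [Real.norm_eq_abs, this]; ring
    have hc1 : (1 : ℝ) ≤ ((Nb i).card : ℝ) := by
      exact_mod_cast Finset.card_pos.mpr ⟨i, hmem i⟩
    have h0 : 0 ≤ 1 - A i := by linarith [(hA i).2]
    have h1 : 1 - A i ≤ 1 := by linarith [(hA i).1]
    rw [hnd]
    have h2 : (1 - A i) ^ 2 ≤ 1 - A i := by nlinarith
    have h3 : (1 - A i) ^ 2 * ‖u i‖ ^ 2 ≤ (1 - A i) * ‖u i‖ ^ 2 :=
      mul_le_mul_of_nonneg_right h2 (sq_nonneg _)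
    have h4 : (0:ℝ) ≤ ((Nb i).card : ℝ) := by linarith
    calc ((Nb i).card : ℝ) * ((1 - A i) ^ 2 * ‖u i‖ ^ 2)
        ≤ ((Nb i).card : ℝ) * ((1 - A i) * ‖u i‖ ^ 2) :=
          mul_le_mul_of_nonneg_left h3 h4
      _ = ((Nb i).card : ℝ) * (1 - A i) * ‖u i‖ ^ 2 := by ring
  -- putting it together
  have key : ∑ i, ∑ j ∈ Nb i, ‖b i - b j‖ ^ 2
      = ∑ i, ∑ j ∈ Nb i, ‖a i - a j‖ ^ 2
        + 2 * (∑ i, ∑ j ∈ Nb i, (inner ℝ (a i - a j) (δ i - δ j) : ℝ))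
        + ∑ i, ∑ j ∈ Nb i, ‖δ i - δ j‖ ^ 2 := by
    simp only [hexp, Finset.sum_add_distrib, Finset.mul_sum]
  have hab : ∀ i, ‖a i - b i‖ ^ 2 = ‖δ i‖ ^ 2 := by
    intro i; rw [hδdef]; simp [norm_sub_rev]
  calc (∑ i, ∑ j ∈ Nb i, ‖b i - b j‖ ^ 2) + 4 * ∑ i, ‖a i - b i‖ ^ 2
      = ∑ i, ∑ j ∈ Nb i, ‖a i - a j‖ ^ 2
        - 4 * ∑ i, ((Nb i).card : ℝ) * (1 - A i) * ‖u i‖ ^ 2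
        + ∑ i, ∑ j ∈ Nb i, ‖δ i - δ j‖ ^ 2
        + 4 * ∑ i, ‖δ i‖ ^ 2 := by
        rw [key, hT]; simp only [hab]; ring
    _ ≤ ∑ i, ∑ j ∈ Nb i, ‖a i - a j‖ ^ 2 := by
        have h4 : ∑ i, ∑ j ∈ Nb i, ‖δ i - δ j‖ ^ 2 + 4 * ∑ i, ‖δ i‖ ^ 2
            ≤ 4 * ∑ i, ((Nb i).card : ℝ) * (1 - A i) * ‖u i‖ ^ 2 := by
          have h5 : (4 : ℝ) * ∑ i, (((Nb i).card : ℝ) - 1) * ‖δ i‖ ^ 2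
              + 4 * ∑ i, ‖δ i‖ ^ 2
              = 4 * ∑ i, ((Nb i).card : ℝ) * ‖δ i‖ ^ 2 := by
            simp only [Finset.mul_sum, ← Finset.sum_add_distrib]
            congr 1; funext i; ring
          have h6 : ∑ i, ((Nb i).card : ℝ) * ‖δ i‖ ^ 2
              ≤ ∑ i, ((Nb i).card : ℝ) * (1 - A i) * ‖u i‖ ^ 2 :=
            Finset.sum_le_sum fun i _ => hper i
          linarith [hU]
        linarith


end aux

/-- The total squared displacement in the mixed HK model is bounded:
`4 Σ_{t<m} Σᵢ ‖xᵢ(t) - xᵢ(t+1)‖² < n² ε²` for all `m ≥ 1`. -/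
theorem mixedHK_total_displacement_bound (n d : ℕ) (hn : 0 < n) (ε : ℝ) (hε : 0 < ε)
    (x : ℕ → Fin n → EuclideanSpace ℝ (Fin d))
    (α : ℕ → Fin n → ℝ) (hα : ∀ t i, α t i ∈ Set.Icc (0 : ℝ) 1)
    (N : ℕ → Fin n → Finset (Fin n))
    (hN : ∀ t i, N t i = Finset.univ.filter (fun j => ‖x t i - x t j‖ ≤ ε))
    (hupd : ∀ t i, x (t + 1) i
      = α t i • x t i + ((1 - α t i) / ((N t i).card : ℝ)) • ∑ j ∈ N t i, x t j) :
    ∀ m : ℕ, 1 ≤ m →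
      4 * ∑ t ∈ Finset.range m, ∑ i : Fin n, ‖x t i - x (t + 1) i‖ ^ 2
        < (n : ℝ) ^ 2 * ε ^ 2 := by
  classical
  intro m _
  set Z : ℕ → ℝ := fun t => ∑ i, ∑ j, min (‖x t i - x t j‖ ^ 2) (ε ^ 2) with hZdef
  -- one-step decrease
  have hstep : ∀ t, Z (t + 1) + 4 * ∑ i, ‖x t i - x (t + 1) i‖ ^ 2 ≤ Z t := by
    intro t
    have hsplit : ∀ (c : Fin n → EuclideanSpace ℝ (Fin d)),
        (∑ i, ∑ j, min (‖c i - c j‖ ^ 2) (ε ^ 2))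
        = ∑ i, ((∑ j ∈ N t i, min (‖c i - c j‖ ^ 2) (ε ^ 2))
            + ∑ j ∈ Finset.univ.filter (fun j => ¬ (‖x t i - x t j‖ ≤ ε)),
                min (‖c i - c j‖ ^ 2) (ε ^ 2)) := by
      intro c
      refine Finset.sum_congr rfl fun i _ => ?_
      rw [hN t i, Finset.sum_filter_add_sum_filter_not]
    have hZt : Z t = ∑ i, ((∑ j ∈ N t i, ‖x t i - x t j‖ ^ 2)
        + ∑ j ∈ Finset.univ.filter (fun j => ¬ (‖x t i - x t j‖ ≤ ε)), ε ^ 2) := by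
      simp only [hZdef]
      rw [hsplit (x t)]
      refine Finset.sum_congr rfl fun i _ => ?_
      congr 1
      · refine Finset.sum_congr rfl fun j hj => ?_
        rw [hN t i] at hj
        have hle : ‖x t i - x t j‖ ≤ ε := (Finset.mem_filter.mp hj).2
        exact min_eq_left (by nlinarith [norm_nonneg (x t i - x t j)])
      · refine Finset.sum_congr rfl fun j hj => ?_
        have hgt : ε < ‖x t i - x t j‖ := lt_of_not_ge (Finset.mem_filter.mp hj).2
        exact min_eq_right (by nlinarith)
    have hZt1 : Z (t + 1) ≤ ∑ i, ((∑ j ∈ N t i, ‖x (t+1) i - x (t+1) j‖ ^ 2)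
        + ∑ j ∈ Finset.univ.filter (fun j => ¬ (‖x t i - x t j‖ ≤ ε)), ε ^ 2) := by
      simp only [hZdef]
      rw [hsplit (x (t+1))]
      refine Finset.sum_le_sum fun i _ => ?_
      gcongr with j hj j hj
      · exact min_le_left _ _
      · exact min_le_right _ _
    have hcore := hk_core (n := n) (d := d) ε hε (x t) (x (t + 1)) (α t)
      (hα t) (N t) (hN t) (hupd t)
    have e1 : ∑ i, ((∑ j ∈ N t i, ‖x (t+1) i - x (t+1) j‖ ^ 2)
        + ∑ j ∈ Finset.univ.filter (fun j => ¬ (‖x t i - x t j‖ ≤ ε)), ε ^ 2)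
        = (∑ i, ∑ j ∈ N t i, ‖x (t+1) i - x (t+1) j‖ ^ 2)
          + ∑ i, ∑ j ∈ Finset.univ.filter (fun j => ¬ (‖x t i - x t j‖ ≤ ε)), ε ^ 2 := by
      rw [Finset.sum_add_distrib]
    have e2 : ∑ i, ((∑ j ∈ N t i, ‖x t i - x t j‖ ^ 2)
        + ∑ j ∈ Finset.univ.filter (fun j => ¬ (‖x t i - x t j‖ ≤ ε)), ε ^ 2)
        = (∑ i, ∑ j ∈ N t i, ‖x t i - x t j‖ ^ 2)
          + ∑ i, ∑ j ∈ Finset.univ.filter (fun j => ¬ (‖x t i - x t j‖ ≤ ε)), ε ^ 2 := by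
      rw [Finset.sum_add_distrib]
    rw [hZt, e2]
    have := hZt1
    rw [e1] at this
    linarith
  -- Z 0 < n² ε²
  have hZ0 : Z 0 < (n : ℝ) ^ 2 * ε ^ 2 := by
    have h1 : Z 0 < ∑ i : Fin n, ∑ j : Fin n, ε ^ 2 := by
      simp only [hZdef]
      obtain ⟨i0⟩ : Nonempty (Fin n) := ⟨⟨0, hn⟩⟩
      refine Finset.sum_lt_sum (fun i _ => Finset.sum_le_sum fun j _ => min_le_right _ _)
        ⟨i0, Finset.mem_univ i0, ?_⟩
      refine Finset.sum_lt_sum (fun j _ => min_le_right _ _)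
        ⟨i0, Finset.mem_univ i0, ?_⟩
      simp only [sub_self, norm_zero]
      rw [show (0:ℝ) ^ 2 = 0 by ring, min_eq_left (sq_nonneg ε)]
      positivity
    have h2 : ∑ i : Fin n, ∑ j : Fin n, ε ^ 2 = (n : ℝ) ^ 2 * ε ^ 2 := by
      simp [Finset.sum_const, Finset.card_univ, nsmul_eq_mul]; ring
    linarith
  -- Z m ≥ 0
  have hZnn : ∀ t, 0 ≤ Z t := by
    intro t
    refine Finset.sum_nonneg fun i _ => Finset.sum_nonneg fun j _ => ?_
    exact le_min (sq_nonneg _) (sq_nonneg _)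
  -- telescoping
  have htel : ∀ m : ℕ, Z m + 4 * ∑ t ∈ Finset.range m, ∑ i, ‖x t i - x (t + 1) i‖ ^ 2
      ≤ Z 0 := by
    intro m
    induction m with
    | zero => simp
    | succ k ih =>
      rw [Finset.sum_range_succ]
      have := hstep k
      linarith
  have := htel m
  linarith [hZnn m]
end

section
/- For a finite undirected graph G with Laplacian L, second smallest eigenvalue λ₂(L), maximum degree Δ(G), and isoperimetric constant i(G) = min{ |∂S|/|S| : S ⊂ V, 0 < |S| ≤ |V|/2 } where ∂S is the set of edges between S and its complement, one has 2 i(G) ≥ λ₂(L) ≥ i(G)²/(2Δ(G)). -/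
open Matrix Finset

set_option linter.unusedSectionVars false

namespace CheegerAux
variable {V : Type*} [Fintype V] [DecidableEq V] (G : SimpleGraph V) [DecidableRel G.Adj]

/-- ordered adjacent pairs -/
def E : Finset (V × V) := (Finset.univ ×ˢ Finset.univ).filter fun p => G.Adj p.1 p.2

def cut (S : Finset V) : ℕ := ((S ×ˢ Sᶜ).filter fun p => G.Adj p.1 p.2).card

lemma mem_E {p : V × V} : p ∈ E G ↔ G.Adj p.1 p.2 := by simp [E]

def swapEmb : V × V ↪ V × V := ⟨Prod.swap, Prod.swap_injective⟩

lemma map_swap_E : (E G).map (swapEmb) = E G := by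
  ext p
  simp only [Finset.mem_map, swapEmb, Function.Embedding.coeFn_mk, mem_E]
  constructor
  · rintro ⟨a, ha, rfl⟩; exact ha.symm
  · intro hp; exact ⟨p.swap, hp.symm, Prod.swap_swap p⟩

lemma sum_E (F : V × V → ℝ) :
    ∑ p ∈ E G, F p = ∑ i, ∑ j ∈ G.neighborFinset i, F (i, j) := by
  rw [E, Finset.sum_filter, Finset.sum_product]
  refine Finset.sum_congr rfl fun i _ => ?_
  rw [SimpleGraph.neighborFinset_eq_filter, Finset.sum_filter]

lemma sum_E_swap (F : V × V → ℝ) : ∑ p ∈ E G, F p = ∑ p ∈ E G, F (p.2, p.1) := by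
  conv_lhs => rw [← map_swap_E G]
  rw [Finset.sum_map]
  rfl

lemma sum_E_fst (h : V → ℝ) : ∑ p ∈ E G, h p.1 = ∑ i, (G.degree i : ℝ) * h i := by
  rw [sum_E]
  refine Finset.sum_congr rfl fun i _ => ?_
  show ∑ _j ∈ G.neighborFinset i, h i = _
  rw [Finset.sum_const, nsmul_eq_mul, SimpleGraph.degree]

lemma sum_E_snd (h : V → ℝ) : ∑ p ∈ E G, h p.2 = ∑ i, (G.degree i : ℝ) * h i := by
  rw [sum_E_swap, sum_E_fst]

lemma cross_filter_eq (S : Finset V) :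
    (E G).filter (fun p => p.1 ∈ S ∧ p.2 ∉ S) = (S ×ˢ Sᶜ).filter fun p => G.Adj p.1 p.2 := by
  ext p
  simp only [Finset.mem_filter, mem_E, Finset.mem_product, Finset.mem_compl]
  tauto

lemma cross_card₁ (S : Finset V) :
    ((E G).filter (fun p => p.1 ∈ S ∧ p.2 ∉ S)).card = cut G S := by
  rw [cross_filter_eq]; rfl

lemma cross_card₂ (S : Finset V) :
    ((E G).filter (fun p => p.1 ∉ S ∧ p.2 ∈ S)).card = cut G S := by
  rw [← cross_card₁ G S]
  have : (E G).filter (fun p => p.1 ∉ S ∧ p.2 ∈ S)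
      = ((E G).filter (fun p => p.1 ∈ S ∧ p.2 ∉ S)).map (swapEmb) := by
    ext p
    simp only [Finset.mem_filter, mem_E, Finset.mem_map, swapEmb,
      Function.Embedding.coeFn_mk]
    constructor
    · rintro ⟨h1, h2, h3⟩; exact ⟨p.swap, ⟨h1.symm, h3, h2⟩, Prod.swap_swap p⟩
    · rintro ⟨a, ⟨h1, h2, h3⟩, rfl⟩; exact ⟨h1.symm, h3, h2⟩
  rw [this, Finset.card_map]

lemma quad_form (L : Matrix V V ℝ)
    (hL : L = Matrix.of fun i j =>
      (if i = j then (G.degree i : ℝ) else 0) - (if G.Adj i j then 1 else 0))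
    (v : V → ℝ) :
    v ⬝ᵥ L.mulVec v = (∑ p ∈ E G, (v p.1 - v p.2) ^ 2) / 2 := by
  have h1 : ∑ p ∈ E G, (v p.1 - v p.2) ^ 2
      = ∑ p ∈ E G, (v p.1)^2 + ∑ p ∈ E G, (v p.2)^2 - 2 * ∑ p ∈ E G, v p.1 * v p.2 := by
    rw [← Finset.sum_add_distrib, Finset.mul_sum, ← Finset.sum_sub_distrib]
    refine Finset.sum_congr rfl fun p _ => by ring
  have h2 : v ⬝ᵥ L.mulVec v
      = ∑ i, (G.degree i : ℝ) * (v i)^2 - ∑ p ∈ E G, v p.1 * v p.2 := by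
    subst hL
    rw [dotProduct, sum_E, ← Finset.sum_sub_distrib]
    refine Finset.sum_congr rfl fun i _ => ?_
    rw [mulVec, dotProduct]
    have e1 : ∀ j, (Matrix.of fun i j =>
        (if i = j then (G.degree i : ℝ) else 0) - (if G.Adj i j then 1 else 0)) i j * v j
        = (if i = j then (G.degree i : ℝ) * v j else 0) - (if G.Adj i j then v j else 0) := by
      intro j; simp only [Matrix.of_apply]; split_ifs <;> ring
    rw [Finset.sum_congr rfl fun j _ => e1 j, Finset.sum_sub_distrib]
    rw [Finset.sum_ite_eq (Finset.univ) i (fun j => (G.degree i : ℝ) * v j)]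
    simp only [Finset.mem_univ, if_true]
    have e2 : ∑ j, (if G.Adj i j then v j else 0) = ∑ j ∈ G.neighborFinset i, v j := by
      rw [SimpleGraph.neighborFinset_eq_filter, Finset.sum_filter]
    rw [e2, mul_sub, Finset.mul_sum]
    ring_nf
  have h3 : ∑ p ∈ E G, v p.1 ^ 2 = ∑ i, (G.degree i : ℝ) * v i ^ 2 := by
    simpa using sum_E_fst G (fun x => v x ^ 2)
  have h4 : ∑ p ∈ E G, v p.2 ^ 2 = ∑ i, (G.degree i : ℝ) * v i ^ 2 := by
    simpa using sum_E_snd G (fun x => v x ^ 2)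
  rw [h2, h1, h3, h4]
  ring

lemma coarea_aux (iG : ℝ) : ∀ d : ℕ, ∀ g : V → ℝ, (∀ x, 0 ≤ g x) →
    (∀ S : Finset V, S.Nonempty → (∀ x ∈ S, 0 < g x) → iG * S.card ≤ cut G S) →
    ((Finset.univ.image g).filter (fun t => 0 < t)).card = d →
    2 * iG * (∑ x, g x) ≤ ∑ p ∈ E G, |g p.1 - g p.2| := by
  intro d
  induction d using Nat.strong_induction_on with
  | _ d ih =>
  intro g hg H hd
  by_cases hP : ((Finset.univ.image g).filter (fun t => 0 < t)) = ∅
  · have hg0 : ∀ x, g x = 0 := by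
      intro x
      by_contra hx
      have hpos : 0 < g x := lt_of_le_of_ne (hg x) (Ne.symm hx)
      have hmem : g x ∈ (Finset.univ.image g).filter (fun t => 0 < t) := by
        refine Finset.mem_filter.2 ⟨Finset.mem_image_of_mem g (Finset.mem_univ x), hpos⟩
      rw [hP] at hmem
      exact absurd hmem (Finset.notMem_empty _)
    simp [hg0]
  · set P := ((Finset.univ.image g).filter (fun t => 0 < t)) with hPdef
    have hPne : P.Nonempty := Finset.nonempty_of_ne_empty hP
    set m := P.min' hPne with hmdef
    have hmP : m ∈ P := P.min'_mem hPne
    have hm_pos : 0 < m := (Finset.mem_filter.1 hmP).2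
    have hm_le : ∀ x, 0 < g x → m ≤ g x := by
      intro x hx
      exact P.min'_le _ (Finset.mem_filter.2 ⟨Finset.mem_image_of_mem g (Finset.mem_univ x), hx⟩)
    set S := Finset.univ.filter (fun x => 0 < g x) with hSdef
    set g' := fun x => if 0 < g x then g x - m else 0 with hg'def
    have hg'0 : ∀ x, 0 ≤ g' x := by
      intro x; rw [hg'def]; dsimp only
      split_ifs with h
      · linarith [hm_le x h]
      · exact le_refl 0
    have hzero : ∀ x, ¬ 0 < g x → g x = 0 := fun x hx => le_antisymm (not_lt.1 hx) (hg x)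
    have hsub : ∀ x, 0 < g' x → 0 < g x := by
      intro x hx; rw [hg'def] at hx; dsimp only at hx
      by_contra h
      rw [if_neg h] at hx; exact lt_irrefl 0 hx
    have hmemS : ∀ x, x ∈ S ↔ 0 < g x := by
      intro x; rw [hSdef]; simp
    -- pointwise identity on edges
    have key : ∀ p : V × V, |g p.1 - g p.2| = |g' p.1 - g' p.2|
        + ((if p.1 ∈ S ∧ p.2 ∉ S then m else 0) + (if p.1 ∉ S ∧ p.2 ∈ S then m else 0)) := by
      intro p
      by_cases h1 : 0 < g p.1 <;> by_cases h2 : 0 < g p.2 <;>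
        simp only [hg'def, hmemS, if_pos, if_neg, h1, h2, not_true, not_false_iff,
          and_true, true_and, and_false, false_and, if_true, if_false]
      · rw [show g p.1 - m - (g p.2 - m) = g p.1 - g p.2 by ring]; ring
      · rw [hzero p.2 h2, sub_zero, sub_zero,
          abs_of_pos h1, abs_of_nonneg (by linarith [hm_le p.1 h1])]; ring
      · rw [hzero p.1 h1, zero_sub, zero_sub, abs_neg, abs_neg,
          abs_of_pos h2, abs_of_nonneg (by linarith [hm_le p.2 h2])]; ring
      · rw [hzero p.1 h1, hzero p.2 h2]; norm_num
    have sum_eq : ∑ p ∈ E G, |g p.1 - g p.2|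
        = (∑ p ∈ E G, |g' p.1 - g' p.2|) + m * (cut G S) + m * (cut G S) := by
      rw [Finset.sum_congr rfl fun p _ => key p, Finset.sum_add_distrib,
        Finset.sum_add_distrib]
      rw [Finset.sum_ite, Finset.sum_ite]
      simp only [Finset.sum_const, Finset.sum_const_zero, smul_zero, add_zero,
        nsmul_eq_mul, cross_card₁, cross_card₂]
      ring
    have sum_g : ∑ x, g x = (∑ x, g' x) + m * S.card := by
      have hpt : ∀ x, g x = g' x + (if x ∈ S then m else 0) := by
        intro x
        by_cases h : 0 < g x <;>
          simp only [hg'def, hmemS, h, if_pos, if_neg, not_false_iff, if_true, if_false]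
        · ring
        · rw [hzero x h]; ring
      rw [Finset.sum_congr rfl fun x _ => hpt x, Finset.sum_add_distrib,
        Finset.sum_ite_mem, Finset.univ_inter, Finset.sum_const, nsmul_eq_mul]
      ring
    -- S nonempty and cut bound
    have hSne : S.Nonempty := by
      obtain ⟨x, _, hx⟩ := Finset.mem_image.1 (Finset.mem_filter.1 hmP).1
      exact ⟨x, (hmemS x).2 (hx ▸ hm_pos)⟩
    have hcutS : iG * S.card ≤ cut G S := H S hSne (fun x hx => (hmemS x).1 hx)
    -- IH
    have hd' : ((Finset.univ.image g').filter (fun t => 0 < t)).card < d := by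
      have hsubset : ((Finset.univ.image g').filter (fun t => 0 < t))
          ⊆ (P.image (fun t => t - m)).erase 0 := by
        intro t ht
        obtain ⟨htim, htpos⟩ := Finset.mem_filter.1 ht
        obtain ⟨x, _, hx⟩ := Finset.mem_image.1 htim
        have hgx : 0 < g x := hsub x (hx ▸ htpos)
        refine Finset.mem_erase.2 ⟨ne_of_gt htpos, ?_⟩
        refine Finset.mem_image.2 ⟨g x, ?_, ?_⟩
        · exact Finset.mem_filter.2 ⟨Finset.mem_image_of_mem g (Finset.mem_univ x), hgx⟩
        · rw [← hx, hg'def]; dsimp only; rw [if_pos hgx]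
      have h0mem : (0 : ℝ) ∈ P.image (fun t => t - m) :=
        Finset.mem_image.2 ⟨m, hmP, sub_self m⟩
      calc ((Finset.univ.image g').filter (fun t => 0 < t)).card
          ≤ ((P.image (fun t => t - m)).erase 0).card := Finset.card_le_card hsubset
        _ = (P.image (fun t => t - m)).card - 1 := Finset.card_erase_of_mem h0mem
        _ = P.card - 1 := by rw [Finset.card_image_of_injective _ (sub_left_injective)]
        _ < d := by
            rw [← hd]
            have : 1 ≤ P.card := Finset.card_pos.2 hPne
            omega
    have ihg' := ih _ hd' g' hg'0
      (fun S' hS'ne hS'pos => H S' hS'ne (fun x hx => hsub x (hS'pos x hx))) rfl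
    -- combine
    have hcut2 : 2 * m * (iG * S.card) ≤ 2 * m * (cut G S) :=
      mul_le_mul_of_nonneg_left hcutS (by linarith)
    rw [sum_eq, sum_g]
    nlinarith [ihg']

lemma card_filter_equiv {α β : Type*} [Fintype α] [Fintype β] [DecidableEq α] [DecidableEq β]
    (e : α ≃ β) (p : α → Prop) [DecidablePred p] :
    (Finset.univ.filter p).card = (Finset.univ.filter fun b => p (e.symm b)).card := by
  refine Finset.card_nbij' (fun a => e a) (fun b => e.symm b) ?_ ?_ ?_ ?_ <;>
    intro x hx <;> simp_all

lemma exists_median {V : Type*} [Fintype V] [DecidableEq V] [Nonempty V] (v : V → ℝ) :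
    ∃ m : ℝ, 2 * (Finset.univ.filter fun x => m < v x).card ≤ Fintype.card V ∧
             2 * (Finset.univ.filter fun x => v x < m).card ≤ Fintype.card V := by
  set N := Fintype.card V with hN
  have hN1 : 1 ≤ N := Fintype.card_pos
  set e := Fintype.equivFin V with he
  set w : Fin N → ℝ := v ∘ e.symm with hw
  set σ := Tuple.sort w with hσ
  have hmono : Monotone (w ∘ σ) := Tuple.monotone_sort w
  set k : Fin N := ⟨N / 2, by omega⟩ with hk
  refine ⟨w (σ k), ?_, ?_⟩
  · have h1 : (Finset.univ.filter fun x => w (σ k) < v x).card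
        = (Finset.univ.filter fun i : Fin N => w (σ k) < w i).card :=
      card_filter_equiv e _
    have h2 : (Finset.univ.filter fun i : Fin N => w (σ k) < w i).card
        = (Finset.univ.filter fun j : Fin N => w (σ k) < w (σ j)).card :=
      card_filter_equiv σ.symm _ |>.trans (by simp)
    have h3 : (Finset.univ.filter fun j : Fin N => w (σ k) < w (σ j)) ⊆ Finset.Ioi k := by
      intro j hj
      rw [Finset.mem_filter] at hj
      rw [Finset.mem_Ioi]
      by_contra h
      exact absurd (hmono (not_lt.1 h : j ≤ k)) (not_le.2 hj.2)
    have h4 := Finset.card_le_card h3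
    rw [Fin.card_Ioi] at h4
    rw [h1, h2]
    have hkv : (k : ℕ) = N / 2 := rfl
    rw [hkv] at h4
    omega
  · have h1 : (Finset.univ.filter fun x => v x < w (σ k)).card
        = (Finset.univ.filter fun i : Fin N => w i < w (σ k)).card :=
      card_filter_equiv e _
    have h2 : (Finset.univ.filter fun i : Fin N => w i < w (σ k)).card
        = (Finset.univ.filter fun j : Fin N => w (σ j) < w (σ k)).card :=
      card_filter_equiv σ.symm _ |>.trans (by simp)
    have h3 : (Finset.univ.filter fun j : Fin N => w (σ j) < w (σ k)) ⊆ Finset.Iio k := by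
      intro j hj
      rw [Finset.mem_filter] at hj
      rw [Finset.mem_Iio]
      by_contra h
      exact absurd (hmono (not_lt.1 h : k ≤ j)) (not_le.2 hj.2)
    have h4 := Finset.card_le_card h3
    rw [Fin.card_Iio] at h4
    rw [h1, h2]
    have hkv : (k : ℕ) = N / 2 := rfl
    rw [hkv] at h4
    omega

lemma pos_decomp (a b : ℝ) :
    (max a 0 - max b 0)^2 + (max (-a) 0 - max (-b) 0)^2 ≤ (a - b)^2 := by
  rcases le_total a 0 with ha | ha <;> rcases le_total b 0 with hb | hb
  · rw [max_eq_right ha, max_eq_right hb, max_eq_left (neg_nonneg.2 ha),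
      max_eq_left (neg_nonneg.2 hb)]
    nlinarith
  · rw [max_eq_right ha, max_eq_left hb, max_eq_left (neg_nonneg.2 ha),
      max_eq_right (neg_nonpos.2 hb)]
    nlinarith [mul_nonpos_of_nonpos_of_nonneg ha hb]
  · rw [max_eq_left ha, max_eq_right hb, max_eq_right (neg_nonpos.2 ha),
      max_eq_left (neg_nonneg.2 hb)]
    nlinarith [mul_nonpos_of_nonpos_of_nonneg hb ha]
  · rw [max_eq_left ha, max_eq_left hb, max_eq_right (neg_nonpos.2 ha),
      max_eq_right (neg_nonpos.2 hb)]
    nlinarith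

lemma max_sq_decomp (a : ℝ) : (max a 0)^2 + (max (-a) 0)^2 = a^2 := by
  rcases le_total a 0 with ha | ha
  · rw [max_eq_right ha, max_eq_left (neg_nonneg.2 ha)]; ring
  · rw [max_eq_left ha, max_eq_right (neg_nonpos.2 ha)]; ring

lemma half_bound (iG : ℝ) (hiG0 : 0 ≤ iG)
    (f : V → ℝ) (hf : ∀ x, 0 ≤ f x)
    (Hcut : ∀ S : Finset V, S.Nonempty → (∀ x ∈ S, 0 < f x) → iG * S.card ≤ cut G S) :
    iG^2 * ∑ x, f x ^ 2 ≤ (G.maxDegree : ℝ) * ∑ p ∈ E G, (f p.1 - f p.2)^2 := by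
  set A := ∑ x, f x ^ 2 with hA
  set Q := ∑ p ∈ E G, (f p.1 - f p.2)^2 with hQ
  have hA0 : 0 ≤ A := Finset.sum_nonneg fun x _ => sq_nonneg _
  have hQ0 : 0 ≤ Q := Finset.sum_nonneg fun p _ => sq_nonneg _
  have hΔ0 : (0:ℝ) ≤ (G.maxDegree : ℝ) := Nat.cast_nonneg _
  -- coarea
  have hco : 2 * iG * A ≤ ∑ p ∈ E G, |f p.1 ^ 2 - f p.2 ^ 2| := by
    have := coarea_aux G iG _ (fun x => f x ^ 2) (fun x => sq_nonneg _)
      (fun S hSne hSpos => Hcut S hSne (fun x hx => by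
        have h := hSpos x hx
        have : f x ≠ 0 := fun h0 => by simp [h0] at h
        exact lt_of_le_of_ne (hf x) (Ne.symm this))) rfl
    simpa using this
  -- Cauchy-Schwarz
  have hCS : (∑ p ∈ E G, |f p.1 ^ 2 - f p.2 ^ 2|)^2
      ≤ Q * ∑ p ∈ E G, (f p.1 + f p.2)^2 := by
    have h1 : ∀ p : V × V, |f p.1 ^ 2 - f p.2 ^ 2| = |f p.1 - f p.2| * |f p.1 + f p.2| := by
      intro p
      rw [← abs_mul]
      congr 1
      ring
    rw [Finset.sum_congr rfl fun p _ => h1 p]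
    have := Finset.sum_mul_sq_le_sq_mul_sq (E G) (fun p => |f p.1 - f p.2|)
      (fun p => |f p.1 + f p.2|)
    simpa [sq_abs] using this
  -- degree bound
  have hD : ∑ p ∈ E G, (f p.1 + f p.2)^2 ≤ 4 * (G.maxDegree : ℝ) * A := by
    have h1 : ∑ p ∈ E G, (f p.1 + f p.2)^2
        ≤ ∑ p ∈ E G, (2 * f p.1 ^2 + 2 * f p.2 ^2) :=
      Finset.sum_le_sum fun p _ => by nlinarith [sq_nonneg (f p.1 - f p.2)]
    have h2 : ∑ p ∈ E G, (2 * f p.1 ^2 + 2 * f p.2 ^2)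
        = 4 * ∑ i, (G.degree i : ℝ) * f i ^ 2 := by
      rw [Finset.sum_add_distrib]
      have e1 : ∑ p ∈ E G, 2 * f p.1 ^ 2 = 2 * ∑ p ∈ E G, f p.1 ^2 := by
        rw [Finset.mul_sum]
      have e2 : ∑ p ∈ E G, 2 * f p.2 ^ 2 = 2 * ∑ p ∈ E G, f p.2 ^2 := by
        rw [Finset.mul_sum]
      rw [e1, e2]
      have e3 : ∑ p ∈ E G, f p.1 ^2 = ∑ i, (G.degree i : ℝ) * f i ^ 2 := by
        simpa using sum_E_fst G (fun x => f x ^ 2)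
      have e4 : ∑ p ∈ E G, f p.2 ^2 = ∑ i, (G.degree i : ℝ) * f i ^ 2 := by
        simpa using sum_E_snd G (fun x => f x ^ 2)
      rw [e3, e4]
      ring
    have h3 : ∑ i, (G.degree i : ℝ) * f i ^ 2 ≤ (G.maxDegree : ℝ) * A := by
      rw [hA, Finset.mul_sum]
      refine Finset.sum_le_sum fun i _ => ?_
      exact mul_le_mul_of_nonneg_right
        (by exact_mod_cast G.degree_le_maxDegree i) (sq_nonneg _)
    calc ∑ p ∈ E G, (f p.1 + f p.2)^2 ≤ 4 * ∑ i, (G.degree i : ℝ) * f i ^ 2 := by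
          rw [← h2] at *; linarith
      _ ≤ 4 * (G.maxDegree : ℝ) * A := by linarith
  -- combine
  rcases eq_or_lt_of_le hA0 with hAz | hApos
  · rw [← hAz, mul_zero]
    positivity
  · have hC0 : 0 ≤ ∑ p ∈ E G, |f p.1 ^ 2 - f p.2 ^ 2| :=
      Finset.sum_nonneg fun p _ => abs_nonneg _
    have h5 : (2*iG*A)^2 ≤ (∑ p ∈ E G, |f p.1 ^ 2 - f p.2 ^ 2|)^2 :=
      pow_le_pow_left₀ (by positivity) hco 2
    have h6 := mul_le_mul_of_nonneg_left hD hQ0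
    have h7 : (4 * iG^2 * A) * A ≤ (4 * ((G.maxDegree : ℝ) * Q)) * A := by nlinarith
    have h8 := le_of_mul_le_mul_right h7 hApos
    linarith

lemma vector_bound [Nonempty V] (iG : ℝ) (hiG0 : 0 ≤ iG)
    (hiG : ∀ S : Finset V, S.Nonempty → 2 * S.card ≤ Fintype.card V →
      iG * S.card ≤ cut G S)
    (v : V → ℝ) (hv1 : v ⬝ᵥ v = 1) (hv0 : v ⬝ᵥ (fun _ => 1) = 0) :
    iG^2 ≤ (G.maxDegree : ℝ) * ∑ p ∈ E G, (v p.1 - v p.2)^2 := by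
  obtain ⟨m, hA, hB⟩ := exists_median v
  set f := fun x => max (v x - m) 0 with hfdef
  set g := fun x => max (m - v x) 0 with hgdef
  have hf0 : ∀ x, 0 ≤ f x := fun x => le_max_right _ _
  have hg0 : ∀ x, 0 ≤ g x := fun x => le_max_right _ _
  have hfpos : ∀ x, 0 < f x → m < v x := by
    intro x hx
    by_contra h
    rw [hfdef] at hx; dsimp only at hx
    rw [max_eq_right (by linarith [not_lt.1 h])] at hx
    exact lt_irrefl 0 hx
  have hgpos : ∀ x, 0 < g x → v x < m := by
    intro x hx
    by_contra h
    rw [hgdef] at hx; dsimp only at hx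
    rw [max_eq_right (by linarith [not_lt.1 h])] at hx
    exact lt_irrefl 0 hx
  have Hf : ∀ S : Finset V, S.Nonempty → (∀ x ∈ S, 0 < f x) → iG * S.card ≤ cut G S := by
    intro S hSne hSpos
    refine hiG S hSne ?_
    calc 2 * S.card ≤ 2 * (Finset.univ.filter fun x => m < v x).card := by
          have : S ⊆ Finset.univ.filter fun x => m < v x := fun x hx =>
            Finset.mem_filter.2 ⟨Finset.mem_univ x, hfpos x (hSpos x hx)⟩
          exact Nat.mul_le_mul_left 2 (Finset.card_le_card this)
      _ ≤ Fintype.card V := hA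
  have Hg : ∀ S : Finset V, S.Nonempty → (∀ x ∈ S, 0 < g x) → iG * S.card ≤ cut G S := by
    intro S hSne hSpos
    refine hiG S hSne ?_
    calc 2 * S.card ≤ 2 * (Finset.univ.filter fun x => v x < m).card := by
          have : S ⊆ Finset.univ.filter fun x => v x < m := fun x hx =>
            Finset.mem_filter.2 ⟨Finset.mem_univ x, hgpos x (hSpos x hx)⟩
          exact Nat.mul_le_mul_left 2 (Finset.card_le_card this)
      _ ≤ Fintype.card V := hB
  have hbf := half_bound G iG hiG0 f hf0 Hf
  have hbg := half_bound G iG hiG0 g hg0 Hg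
  have hQsplit : ∑ p ∈ E G, (f p.1 - f p.2)^2 + ∑ p ∈ E G, (g p.1 - g p.2)^2
      ≤ ∑ p ∈ E G, (v p.1 - v p.2)^2 := by
    rw [← Finset.sum_add_distrib]
    refine Finset.sum_le_sum fun p _ => ?_
    have := pos_decomp (v p.1 - m) (v p.2 - m)
    simpa [hfdef, hgdef, neg_sub, sub_sub_sub_cancel_right] using this
  have hnorm : (1:ℝ) ≤ ∑ x, f x ^ 2 + ∑ x, g x ^ 2 := by
    have h1 : ∑ x, f x ^ 2 + ∑ x, g x ^ 2 = ∑ x, (v x - m)^2 := by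
      rw [← Finset.sum_add_distrib]
      refine Finset.sum_congr rfl fun x _ => ?_
      have := max_sq_decomp (v x - m)
      simpa [hfdef, hgdef, neg_sub] using this
    have h2 : ∑ x, (v x - m)^2
        = (∑ x, v x * v x) - 2 * m * (∑ x, v x * 1) + (Fintype.card V : ℝ) * m^2 := by
      have hpt : ∀ x : V, (v x - m)^2 = v x * v x - 2 * m * (v x * 1) + m^2 := fun x => by
        ring
      rw [Finset.sum_congr rfl fun x _ => hpt x, Finset.sum_add_distrib,
        Finset.sum_sub_distrib, ← Finset.mul_sum, Finset.sum_const, nsmul_eq_mul,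
        Finset.card_univ]
    rw [dotProduct] at hv1 hv0
    rw [h1, h2, hv1, hv0]
    nlinarith [sq_nonneg m, Nat.cast_nonneg (α := ℝ) (Fintype.card V)]
  have hΔ0 : (0:ℝ) ≤ (G.maxDegree : ℝ) := Nat.cast_nonneg _
  calc iG^2 = iG^2 * 1 := by ring
    _ ≤ iG^2 * (∑ x, f x ^ 2 + ∑ x, g x ^ 2) :=
        mul_le_mul_of_nonneg_left hnorm (sq_nonneg _)
    _ = iG^2 * ∑ x, f x ^ 2 + iG^2 * ∑ x, g x ^ 2 := by ring
    _ ≤ (G.maxDegree : ℝ) * ∑ p ∈ E G, (f p.1 - f p.2)^2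
        + (G.maxDegree : ℝ) * ∑ p ∈ E G, (g p.1 - g p.2)^2 := add_le_add hbf hbg
    _ ≤ (G.maxDegree : ℝ) * ∑ p ∈ E G, (v p.1 - v p.2)^2 := by nlinarith [hQsplit]

lemma sum_ite_mem_univ (S : Finset V) (p q : ℝ) :
    ∑ x, (if x ∈ S then p else q) = S.card * p + Sᶜ.card * q := by
  have h1 : Finset.univ.filter (fun x => x ∈ S) = S := by ext x; simp
  have h2 : Finset.univ.filter (fun x => ¬ x ∈ S) = Sᶜ := by ext x; simp
  rw [Finset.sum_ite, Finset.sum_const, Finset.sum_const, h1, h2, nsmul_eq_mul, nsmul_eq_mul]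

end CheegerAux

open CheegerAux in
/-- Lemma 7 (Cheeger's inequality): `2 i(G) ≥ λ₂(L) ≥ i(G)² / (2 Δ(G))`, where
`λ₂(L)` is the second smallest eigenvalue of the Laplacian, characterized by
the Courant–Fischer formula as `min { vᵀLv : ‖v‖ = 1, v ⊥ 𝟙 }`. -/
theorem cheeger_inequality
    (V : Type*) [Fintype V] [DecidableEq V] [Nonempty V]
    (G : SimpleGraph V) [DecidableRel G.Adj]
    (L : Matrix V V ℝ)
    (hL : L = Matrix.of fun i j =>
      (if i = j then (G.degree i : ℝ) else 0) - (if G.Adj i j then 1 else 0))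
    (lam2 : ℝ)
    (hlam2 : lam2 = sInf {r : ℝ | ∃ v : V → ℝ,
      v ⬝ᵥ v = 1 ∧ v ⬝ᵥ (fun _ => 1) = 0 ∧ r = v ⬝ᵥ L.mulVec v})
    (iG : ℝ)
    (hiG : iG = sInf {r : ℝ | ∃ S : Finset V, S.Nonempty ∧
      2 * S.card ≤ Fintype.card V ∧
      r = (((S ×ˢ Sᶜ).filter fun p => G.Adj p.1 p.2).card : ℝ) / (S.card : ℝ)}) :
    lam2 ≤ 2 * iG ∧ iG ^ 2 / (2 * (G.maxDegree : ℝ)) ≤ lam2 := by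
  set setL := {r : ℝ | ∃ v : V → ℝ,
      v ⬝ᵥ v = 1 ∧ v ⬝ᵥ (fun _ => 1) = 0 ∧ r = v ⬝ᵥ L.mulVec v} with hsetL
  set setI := {r : ℝ | ∃ S : Finset V, S.Nonempty ∧
      2 * S.card ≤ Fintype.card V ∧
      r = (((S ×ˢ Sᶜ).filter fun p => G.Adj p.1 p.2).card : ℝ) / (S.card : ℝ)} with hsetI
  have hcutdef : ∀ S : Finset V,
      (((S ×ˢ Sᶜ).filter fun p => G.Adj p.1 p.2).card : ℝ) = (cut G S : ℝ) := fun S => rfl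

  rcases le_or_gt 2 (Fintype.card V) with hn2 | hn1
  · -- main case : at least two vertices
    have hLnonneg : ∀ r ∈ setL, 0 ≤ r := by
      rintro r ⟨v, hv1, hv0, rfl⟩
      rw [quad_form G L hL v]
      positivity
    have hLbdd : BddBelow setL := ⟨0, hLnonneg⟩
    have hLne : setL.Nonempty := by
      obtain ⟨x₀, y₀, hxy⟩ := Fintype.exists_pair_of_one_lt_card (α := V) (by omega)
      set s : ℝ := (Real.sqrt 2)⁻¹ with hs
      have hsq : s ^ 2 = 2⁻¹ := by
        rw [hs, inv_pow, Real.sq_sqrt (by norm_num : (0:ℝ) ≤ 2)]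
      set v : V → ℝ := fun z => if z = x₀ then s else if z = y₀ then -s else 0 with hv
      have hvv : v ⬝ᵥ v = 1 := by
        rw [dotProduct]
        have hpt : ∀ z, v z * v z
            = (if z = x₀ then s^2 else 0) + (if z = y₀ then s^2 else 0) := by
          intro z
          rw [hv]; dsimp only
          by_cases h1 : z = x₀ <;> by_cases h2 : z = y₀
          · exact absurd (h1 ▸ h2) hxy
          all_goals simp [h1, h2, hxy, Ne.symm hxy] <;> ring
        rw [Finset.sum_congr rfl fun z _ => hpt z, Finset.sum_add_distrib,
          Finset.sum_ite_eq' Finset.univ x₀ (fun _ => s^2),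
          Finset.sum_ite_eq' Finset.univ y₀ (fun _ => s^2)]
        simp [hsq]
        norm_num
      have hv1' : v ⬝ᵥ (fun _ => 1) = 0 := by
        rw [dotProduct]
        have hpt : ∀ z, v z * 1
            = (if z = x₀ then s else 0) + (if z = y₀ then -s else 0) := by
          intro z
          rw [hv]; dsimp only
          by_cases h1 : z = x₀ <;> by_cases h2 : z = y₀
          · exact absurd (h1 ▸ h2) hxy
          all_goals simp [h1, h2, hxy, Ne.symm hxy]
        rw [Finset.sum_congr rfl fun z _ => hpt z, Finset.sum_add_distrib,
          Finset.sum_ite_eq' Finset.univ x₀ (fun _ => s),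
          Finset.sum_ite_eq' Finset.univ y₀ (fun _ => -s)]
        simp
      exact ⟨v ⬝ᵥ L.mulVec v, v, hvv, hv1', rfl⟩
    -- properties of setI
    have hInonneg : ∀ r ∈ setI, 0 ≤ r := by
      rintro r ⟨S, h1, h2, rfl⟩
      positivity
    have hIne : setI.Nonempty := by
      obtain x₀ := Classical.arbitrary V
      exact ⟨_, ⟨{x₀}, Finset.singleton_nonempty x₀, by simp; omega, rfl⟩⟩
    have hIfin : setI.Finite := by
      refine Set.Finite.subset (Set.finite_range
        (fun S : Finset V => ((cut G S : ℝ))/(S.card : ℝ))) ?_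
      rintro r ⟨S, _, _, rfl⟩
      exact ⟨S, rfl⟩
    have hiGmem : iG ∈ setI := hiG ▸ hIne.csInf_mem hIfin
    have hiG0 : 0 ≤ iG := hInonneg _ hiGmem
    have hiGlb : ∀ S : Finset V, S.Nonempty → 2 * S.card ≤ Fintype.card V →
        iG * S.card ≤ (cut G S : ℝ) := by
      intro S h1 h2
      have hmem : ((cut G S : ℝ))/(S.card : ℝ) ∈ setI := ⟨S, h1, h2, rfl⟩
      have hle : iG ≤ (cut G S : ℝ)/(S.card : ℝ) := hiG ▸ csInf_le ⟨0, hInonneg⟩ hmem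
      have hcpos : (0:ℝ) < (S.card : ℝ) := by exact_mod_cast Finset.card_pos.2 h1
      rw [le_div_iff₀ hcpos] at hle
      exact hle
    constructor
    · -- easy direction
      obtain ⟨S₀, hS₀ne, hS₀card, hiGval⟩ := hiGmem
      have hha : 0 < S₀.card := Finset.card_pos.2 hS₀ne
      have hab : S₀.card + S₀ᶜ.card = Fintype.card V := by
        rw [Finset.card_compl]; omega
      have hb : 0 < S₀ᶜ.card := by omega
      set A := (S₀.card : ℝ) with hA
      set B := (S₀ᶜ.card : ℝ) with hB
      set N := (Fintype.card V : ℝ) with hN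
      set K := (cut G S₀ : ℝ) with hK
      have hApos : (0:ℝ) < A := by rw [hA]; exact_mod_cast hha
      have hBpos : (0:ℝ) < B := by rw [hB]; exact_mod_cast hb
      have hNpos : (0:ℝ) < N := by rw [hN]; exact_mod_cast Fintype.card_pos
      have hK0 : (0:ℝ) ≤ K := by rw [hK]; positivity
      have hABN : A + B = N := by rw [hA, hB, hN]; exact_mod_cast hab
      have h2A : 2 * A ≤ N := by rw [hA, hN]; exact_mod_cast hS₀card
      set c := Real.sqrt (A * B * N) with hc
      have hc2 : c^2 = A*B*N := Real.sq_sqrt (by positivity)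
      have hcpos : 0 < c := Real.sqrt_pos.2 (by positivity)
      set v : V → ℝ := fun x => if x ∈ S₀ then B/c else -(A/c) with hv
      have hvv : v ⬝ᵥ v = 1 := by
        rw [dotProduct]
        have hpt : ∀ x, v x * v x = if x ∈ S₀ then (B/c)^2 else (A/c)^2 := by
          intro x; rw [hv]; dsimp only; split_ifs <;> ring
        rw [Finset.sum_congr rfl fun x _ => hpt x, sum_ite_mem_univ]
        rw [div_pow, div_pow, hc2]
        have e : A * (B ^ 2 / (A * B * N)) + B * (A ^ 2 / (A * B * N))
            = (A * B * (A + B)) / (A * B * N) := by ring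
        rw [e, hABN]
        exact div_self (mul_pos (mul_pos hApos hBpos) hNpos).ne'
      have hv1' : v ⬝ᵥ (fun _ => 1) = 0 := by
        rw [dotProduct]
        have hpt : ∀ x, v x * 1 = if x ∈ S₀ then (B/c) else -(A/c) := by
          intro x; rw [hv]; dsimp only; split_ifs <;> ring
        rw [Finset.sum_congr rfl fun x _ => hpt x, sum_ite_mem_univ]
        ring
      have hquad : v ⬝ᵥ L.mulVec v = (N/c)^2 * K := by
        rw [quad_form G L hL v]
        have hpt : ∀ p : V × V, (v p.1 - v p.2)^2
            = (if p.1 ∈ S₀ ∧ p.2 ∉ S₀ then (N/c)^2 else 0)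
            + (if p.1 ∉ S₀ ∧ p.2 ∈ S₀ then (N/c)^2 else 0) := by
          intro p; rw [hv]; dsimp only
          by_cases h1 : p.1 ∈ S₀ <;> by_cases h2 : p.2 ∈ S₀ <;>
            simp only [h1, h2, if_true, if_false, not_true, not_false_iff,
              and_true, true_and, and_false, false_and]
          · ring
          · have e : B/c - -(A/c) = N/c := by rw [← hABN]; ring
            rw [e]; ring
          · have e : -(A/c) - B/c = -(N/c) := by rw [← hABN]; ring
            rw [e]; ring
          · ring
        rw [Finset.sum_congr rfl fun p _ => hpt p, Finset.sum_add_distrib,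
          Finset.sum_ite, Finset.sum_ite]
        simp only [Finset.sum_const, Finset.sum_const_zero, smul_zero, add_zero,
          nsmul_eq_mul, cross_card₁, cross_card₂]
        rw [← hK]
        ring
      have hmemL : v ⬝ᵥ L.mulVec v ∈ setL := ⟨v, hvv, hv1', rfl⟩
      have h1 : lam2 ≤ (N/c)^2 * K := by
        rw [hlam2, ← hquad]
        exact csInf_le hLbdd hmemL
      have e1 : (N/c)^2 * K = (N*K)/(A*B) := by
        rw [div_pow, hc2, div_mul_eq_mul_div,
          div_eq_div_iff (mul_pos (mul_pos hApos hBpos) hNpos).ne' (mul_pos hApos hBpos).ne']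
        ring
      have e2 : iG = K / A := by
        rw [hiGval, hcutdef S₀]
      have h2 : (N*K)/(A*B) ≤ 2 * (K/A) := by
        have hNB : N ≤ 2 * B := by linarith
        have e3 : 2 * (K/A) = (2*K)/A := by ring
        rw [e3, div_le_div_iff₀ (mul_pos hApos hBpos) hApos]
        nlinarith [mul_nonneg (mul_nonneg hK0 hApos.le) (sub_nonneg.2 hNB)]
      rw [e2]
      linarith [h1, e1 ▸ h2]
    · -- hard direction
      rw [hlam2]
      refine le_csInf hLne ?_
      rintro r ⟨v, hv1, hv0, rfl⟩
      have hb := vector_bound G iG hiG0 hiGlb v hv1 hv0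
      have hq := quad_form G L hL v
      rcases Nat.eq_zero_or_pos G.maxDegree with hΔ | hΔ
      · have hz : iG ^ 2 / (2 * (G.maxDegree : ℝ)) = 0 := by
          rw [hΔ]; norm_num
        rw [hz, hq]
        positivity
      · have hΔpos : (0:ℝ) < (G.maxDegree : ℝ) := by exact_mod_cast hΔ
        rw [div_le_iff₀ (mul_pos two_pos hΔpos), hq]
        nlinarith [hb]

  · -- one vertex
    have hc1 : Fintype.card V = 1 := by have := Fintype.card_pos (α := V); omega
    obtain ⟨x₀, hx₀⟩ := Fintype.card_eq_one_iff.1 hc1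
    have huniv : (Finset.univ : Finset V) = {x₀} := by
      ext y; simp [hx₀ y]
    have hIempty : setI = ∅ := by
      rw [Set.eq_empty_iff_forall_notMem]
      rintro r ⟨S, hSne, hScard, _⟩
      have := Finset.card_pos.2 hSne
      omega
    have hLempty : setL = ∅ := by
      rw [Set.eq_empty_iff_forall_notMem]
      rintro r ⟨v, hv1, hv0, _⟩
      rw [dotProduct] at hv1 hv0
      simp only [huniv, Finset.sum_singleton, mul_one] at hv1 hv0
      rw [hv0] at hv1
      norm_num at hv1
    rw [hlam2, hiG, hIempty, hLempty, Real.sInf_empty]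
    norm_num
end

section
/- In the mixed HK model with n = 2 agents in ℝ, initial opinions x₁(0) = 0, x₂(0) = ε, and α₁(t) = α₂(t) = 1/2 for all t, the two opinions are distinct at every finite time t (so the dynamics never reaches a steady state in finite time), yet x₂(t) - x₁(t) = ε/2^t → 0. -/
open Filter

/-- Example: with two agents, initial opinions `0` and `ε`, and stubbornness
`1/2` for both agents at all times, the opinions stay distinct at every finite
time while their gap `ε / 2^t` tends to zero. -/
theorem mixedHK_two_agents_never_terminates (ε : ℝ) (hε : 0 < ε)
    (x : ℕ → Fin 2 → ℝ)
    (α : ℕ → Fin 2 → ℝ) (hα : ∀ t i, α t i = 1 / 2)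
    (N : ℕ → Fin 2 → Finset (Fin 2))
    (hN : ∀ t i, N t i = Finset.univ.filter (fun j => |x t i - x t j| ≤ ε))
    (hupd : ∀ t i, x (t + 1) i
      = α t i * x t i + ((1 - α t i) / ((N t i).card : ℝ)) * ∑ j ∈ N t i, x t j)
    (h0 : x 0 0 = 0) (h1 : x 0 1 = ε) :
    (∀ t, x t 0 ≠ x t 1 ∧ x t 1 - x t 0 = ε / 2 ^ t) ∧
    Tendsto (fun t => x t 1 - x t 0) atTop (nhds 0) := by
  have key : ∀ t, x t 1 - x t 0 = ε / 2 ^ t := by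
    intro t
    induction t with
    | zero => simp [h0, h1]
    | succ t ih =>
      have hgap : |x t 1 - x t 0| ≤ ε := by
        rw [ih, abs_of_nonneg (by positivity)]
        have h2 : (1 : ℝ) ≤ 2 ^ t := one_le_pow₀ (by norm_num)
        calc ε / 2 ^ t ≤ ε / 1 := by
              apply div_le_div_of_nonneg_left hε.le one_pos h2
          _ = ε := by ring
      have hNuniv : ∀ i, N t i = Finset.univ := by
        intro i
        rw [hN]
        apply Finset.filter_true_of_mem
        intro j _
        fin_cases i <;> fin_cases j <;>
          simp only [sub_self, abs_zero] <;>
          first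
          | exact hε.le
          | rwa [abs_sub_comm] at hgap
          | exact hgap
          | positivity
      have hcard : ((N t 0).card : ℝ) = 2 := by rw [hNuniv]; simp
      have hcard1 : ((N t 1).card : ℝ) = 2 := by rw [hNuniv]; simp
      have hsum : ∀ i, ∑ j ∈ N t i, x t j = x t 0 + x t 1 := by
        intro i; rw [hNuniv]
        rw [Fin.sum_univ_two]
      have e1 := hupd t 1
      have e0 := hupd t 0
      rw [hα, hsum, hcard1] at e1
      rw [hα, hsum, hcard] at e0
      have h' : x (t + 1) 1 - x (t + 1) 0 = (x t 1 - x t 0) / 2 := by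
        rw [e1, e0]; ring
      rw [h', ih, pow_succ, div_div]
  refine ⟨fun t => ⟨?_, key t⟩, ?_⟩
  · intro h
    have hk := key t
    rw [h, sub_self] at hk
    have hpos : 0 < ε / 2 ^ t := by positivity
    linarith
  · have : (fun t => x t 1 - x t 0) = fun t => ε / 2 ^ t := funext key
    rw [this]
    simpa using tendsto_const_nhds.div_atTop (tendsto_pow_atTop_atTop_of_one_lt (by norm_num : (1:ℝ) < 2))
end

section
/- Suppose in the mixed HK model that every connected component of the opinion profile graph G(t) is δ-trivial for some 0 < δ ≤ ε/4, and that at time t+1 some edge of G(t+1) joins two agents lying in different components of G(t). Then the component of G(t+1) containing that edge is (ε/2)-nontrivial; i.e., there exist i, j with ‖xᵢ(t+1) - xⱼ(t+1)‖ > ε/2 within one component of G(t+1). -/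
/-- If every component of the profile graph at time `t` is δ-trivial with
`0 < δ ≤ ε/4`, and at time `t+1` an edge joins agents from different
components of `G(t)`, then that pair is at distance more than `ε/2` at time
`t+1` (so its component in `G(t+1)` is (ε/2)-nontrivial). -/
theorem mixedHK_component_interaction_eps_half_nontrivial
    (n d : ℕ) (ε δ : ℝ) (hε : 0 < ε) (hδ0 : 0 < δ) (hδ : δ ≤ ε / 4)
    (x : ℕ → Fin n → EuclideanSpace ℝ (Fin d))
    (α : ℕ → Fin n → ℝ) (hα : ∀ t i, α t i ∈ Set.Icc (0 : ℝ) 1)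
    (N : ℕ → Fin n → Finset (Fin n))
    (hN : ∀ t i, N t i = Finset.univ.filter (fun j => ‖x t i - x t j‖ ≤ ε))
    (hupd : ∀ t i, x (t + 1) i
      = α t i • x t i + ((1 - α t i) / ((N t i).card : ℝ)) • ∑ j ∈ N t i, x t j)
    (G : ℕ → SimpleGraph (Fin n))
    (hG : ∀ t i j, (G t).Adj i j ↔ i ≠ j ∧ ‖x t i - x t j‖ ≤ ε)
    (t : ℕ)
    (htriv : ∀ i j, (G t).Reachable i j → ‖x t i - x t j‖ ≤ δ) :
    ∀ i j, (G (t + 1)).Adj i j → ¬ (G t).Reachable i j →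
      ε / 2 < ‖x (t + 1) i - x (t + 1) j‖ := by
  -- step bound: each agent moves at most δ
  have key : ∀ i, ‖x (t + 1) i - x t i‖ ≤ δ := by
    intro i
    have hi_mem : i ∈ N t i := by
      rw [hN]; simp [hε.le]
    have hcard : 0 < (N t i).card := Finset.card_pos.2 ⟨i, hi_mem⟩
    have hm : ((N t i).card : ℝ) ≠ 0 := by positivity
    have hα0 := (hα t i).1
    have hα1 := (hα t i).2
    set c : ℝ := (1 - α t i) / ((N t i).card : ℝ) with hc
    have hc0 : 0 ≤ c := by
      apply div_nonneg (by linarith)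
      positivity
    have hcm : c * ((N t i).card : ℝ) = 1 - α t i := div_mul_cancel₀ _ hm
    have hrew : x (t + 1) i - x t i = c • ∑ j ∈ N t i, (x t j - x t i) := by
      rw [hupd, Finset.sum_sub_distrib, smul_sub, Finset.sum_const,
        ← Nat.cast_smul_eq_nsmul ℝ, smul_smul, hcm]
      module
    rw [hrew]
    calc ‖c • ∑ j ∈ N t i, (x t j - x t i)‖
        = c * ‖∑ j ∈ N t i, (x t j - x t i)‖ := by
          rw [norm_smul, Real.norm_of_nonneg hc0]
      _ ≤ c * ∑ j ∈ N t i, ‖x t j - x t i‖ := by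
          apply mul_le_mul_of_nonneg_left (norm_sum_le _ _) hc0
      _ ≤ c * ∑ j ∈ N t i, δ := by
          apply mul_le_mul_of_nonneg_left _ hc0
          apply Finset.sum_le_sum
          intro j hj
          rcases eq_or_ne j i with rfl | hji
          · simp [hδ0.le]
          · have hle : ‖x t i - x t j‖ ≤ ε := by
              rw [hN] at hj; simpa using hj
            have : (G t).Adj j i := by
              rw [hG]; exact ⟨hji, by rwa [norm_sub_rev]⟩
            exact htriv j i this.reachable
      _ = c * ((N t i).card : ℝ) * δ := by
          rw [Finset.sum_const, nsmul_eq_mul]; ring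
      _ ≤ δ := by
          rw [hcm]; nlinarith
  intro i j hadj hnr
  have hfar : ε < ‖x t i - x t j‖ := by
    by_contra h
    push_neg at h
    rcases eq_or_ne i j with rfl | hij
    · exact hnr (SimpleGraph.Reachable.refl i)
    · exact hnr (SimpleGraph.Adj.reachable ((hG t i j).2 ⟨hij, h⟩))
  have h1 := key i
  have h2 := key j
  have htri : ‖x t i - x t j‖ ≤ ‖x t i - x (t + 1) i‖ + ‖x (t + 1) i - x (t + 1) j‖
      + ‖x (t + 1) j - x t j‖ := by
    have := norm_add₃_le (a := x t i - x (t + 1) i) (b := x (t + 1) i - x (t + 1) j)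
      (c := x (t + 1) j - x t j)
    simpa using this
  rw [norm_sub_rev] at h1
  linarith
end

section
/- In the mixed HK model, suppose sup_{t} max_{i ∈ [n]} αᵢ(t) =: γ < 1 and let τ be the first time every connected component of the profile graph is δ-trivial (0 < δ ≤ ε). Then τ < n^{10} (ε/δ)² / (8(1-γ)²). -/
open Finset


private lemma cross_edge {V : Type*} {G : SimpleGraph V} (S : Set V) :
    ∀ {a b : V}, G.Walk a b → a ∈ S → b ∉ S → ∃ u v, G.Adj u v ∧ u ∈ S ∧ v ∉ S := by
  intro a b w
  induction w with
  | nil => intro ha hb; exact absurd ha hb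
  | @cons a c b h p ih =>
    intro ha hb
    by_cases hc : c ∈ S
    · exact ih hc hb
    · exact ⟨a, c, h, ha, hc⟩

set_option maxHeartbeats 1000000 in
private lemma bad_step {n d : ℕ} {ε δ γ : ℝ} (hε : 0 < ε) (hδ0 : 0 < δ) (hγ : γ < 1)
    (X X' : Fin n → EuclideanSpace ℝ (Fin d)) (α : Fin n → ℝ)
    (hα : ∀ i, α i ∈ Set.Icc (0:ℝ) 1) (hγsup : ∀ i, α i ≤ γ)
    (N : Fin n → Finset (Fin n))
    (hN : ∀ i, N i = Finset.univ.filter (fun j => ‖X i - X j‖ ≤ ε))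
    (hupd : ∀ i, X' i = α i • X i + ((1 - α i) / ((N i).card : ℝ)) • ∑ j ∈ N i, X j)
    (G : SimpleGraph (Fin n)) (hG : ∀ i j, G.Adj i j ↔ i ≠ j ∧ ‖X i - X j‖ ≤ ε)
    (i0 j0 : Fin n) (hreach : G.Reachable i0 j0) (hfar : δ < ‖X i0 - X j0‖) :
    ((1-γ)*δ)^2 < (∑ i, ‖X' i - X i‖^2) * (((n:ℝ)-1)^2 * (n:ℝ)^4) := by
  have hβ : 0 < 1 - γ := by linarith
  have hne : i0 ≠ j0 := by rintro rfl; rw [sub_self, norm_zero] at hfar; linarith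
  have hn1 : 1 < n := by
    have : Nontrivial (Fin n) := ⟨⟨i0, j0, hne⟩⟩
    simpa using Fintype.one_lt_card_iff_nontrivial.mpr this
  have hnR : (2:ℝ) ≤ (n:ℝ) := by exact_mod_cast hn1
  have hn1R : (0:ℝ) < (n:ℝ) - 1 := by linarith
  have hnpos : (0:ℝ) < (n:ℝ) := by linarith
  have hmem : ∀ i, i ∈ N i := fun i => by simp [hN, hε.le]
  have hsym : ∀ i j, j ∈ N i ↔ i ∈ N j := fun i j => by
    simp only [hN, Finset.mem_filter, Finset.mem_univ, true_and]
    rw [norm_sub_rev]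
  have hcard : ∀ i, 0 < ((N i).card : ℝ) := fun i => by
    exact_mod_cast Finset.card_pos.mpr ⟨i, hmem i⟩
  have hcardn : ∀ i, ((N i).card : ℝ) ≤ n := fun i => by
    exact_mod_cast (Finset.card_le_univ (N i)).trans_eq (by simp)
  set v : EuclideanSpace ℝ (Fin d) := X i0 - X j0 with hv
  have hv0 : v ≠ 0 := by
    intro h; rw [h, norm_zero] at hfar; linarith
  have hvn : ‖v‖ ≠ 0 := norm_ne_zero_iff.mpr hv0
  set u : EuclideanSpace ℝ (Fin d) := ‖v‖⁻¹ • v with hu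
  have hu1 : ‖u‖ = 1 := norm_smul_inv_norm hv0
  set p : Fin n → ℝ := fun i => (inner ℝ (X i) u : ℝ) with hp
  have hpdiff : δ < p i0 - p j0 := by
    have heq : p i0 - p j0 = ‖v‖ := by
      simp only [hp]
      rw [← inner_sub_left, hu, real_inner_smul_right, real_inner_self_eq_norm_sq]
      field_simp
      ring
    linarith
  set w : ℝ := δ / ((n:ℝ)-1) with hwdef
  have hw : 0 < w := div_pos hδ0 hn1R
  have hw' : ((n:ℝ)-1) * w = δ := by rw [hwdef]; field_simp
  set L : ℝ := p j0 with hL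
  have hpi0 : L + δ < p i0 := by rw [hL]; linarith
  -- pigeonhole: an empty band
  have hgap : ∃ k : ℕ, k < n - 1 ∧
      ∀ i, ¬(L + (k:ℝ)*w < p i ∧ p i ≤ L + ((k:ℝ)+1)*w) := by
    by_contra hcon
    push_neg at hcon
    choose g hg1 hg2 using hcon
    have hkub : ∀ (k : ℕ), k < n - 1 → ((k:ℝ)+1) ≤ (n:ℝ) - 1 := by
      intro k hk
      have : (k:ℕ)+1 ≤ n - 1 := hk
      have h2 : ((k:ℕ):ℝ) + 1 ≤ ((n-1:ℕ):ℝ) := by exact_mod_cast this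
      rwa [Nat.cast_sub (le_of_lt hn1), Nat.cast_one] at h2
    have key : ∀ (k) (h : k < n - 1), g k h ∈ (Finset.univ.erase i0).erase j0 := by
      intro k h
      have hup : p (g k h) ≤ L + δ := by
        have h1 := hg2 k h
        have h2 : ((k:ℝ)+1)*w ≤ ((n:ℝ)-1)*w :=
          mul_le_mul_of_nonneg_right (hkub k h) hw.le
        rw [hw'] at h2; linarith
      have hlow : L < p (g k h) := by
        have h1 := hg1 k h
        have h2 : 0 ≤ (k:ℝ)*w := by positivity
        linarith
      refine Finset.mem_erase.mpr ⟨?_, Finset.mem_erase.mpr ⟨?_, Finset.mem_univ _⟩⟩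
      · intro hEq; rw [hEq, ← hL] at hlow; exact lt_irrefl _ hlow
      · intro hEq; rw [hEq] at hup; linarith
    have mono : ∀ k1 h1 k2 h2, k1 < k2 → p (g k1 h1) < p (g k2 h2) := by
      intro k1 h1 k2 h2 hlt
      have hc : ((k1:ℝ)+1) ≤ (k2:ℝ) := by exact_mod_cast hlt
      have ha := hg2 k1 h1
      have hb := hg1 k2 h2
      have : ((k1:ℝ)+1)*w ≤ (k2:ℝ)*w := mul_le_mul_of_nonneg_right hc hw.le
      linarith
    have hcard2 : (Finset.range (n-1)).card ≤ ((Finset.univ.erase i0).erase j0).card := by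
      apply Finset.card_le_card_of_injOn (fun k => if h : k < n - 1 then g k h else i0)
      · intro k hk
        rw [Finset.mem_coe, Finset.mem_range] at hk
        simp only; rw [dif_pos hk]; exact key k hk
      · intro k1 hk1 k2 hk2 heq
        rw [Finset.mem_coe, Finset.mem_range] at hk1 hk2
        simp only at heq
        rw [dif_pos hk1, dif_pos hk2] at heq
        rcases Nat.lt_trichotomy k1 k2 with h | h | h
        · have := mono k1 hk1 k2 hk2 h; rw [heq] at this; exact absurd this (lt_irrefl _)
        · exact h
        · have := mono k2 hk2 k1 hk1 h; rw [heq] at this; exact absurd this (lt_irrefl _)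
    rw [Finset.card_range,
      Finset.card_erase_of_mem (Finset.mem_erase.mpr ⟨hne.symm, Finset.mem_univ _⟩),
      Finset.card_erase_of_mem (Finset.mem_univ _),
      Finset.card_univ, Fintype.card_fin] at hcard2
    omega
  obtain ⟨k, hk, hek⟩ := hgap
  have hkR : (k:ℝ) ≤ (n:ℝ) - 2 := by
    have : (k:ℕ) + 2 ≤ n := by omega
    have h2 : ((k:ℕ):ℝ) + 2 ≤ (n:ℝ) := by exact_mod_cast this
    linarith
  set F : Finset (Fin n) := Finset.univ.filter (fun i => L + (k:ℝ)*w < p i) with hF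
  have hFmem : ∀ i, i ∈ F ↔ L + (k:ℝ)*w < p i := fun i => by simp [hF]
  have hhigh : ∀ i ∈ F, L + ((k:ℝ)+1)*w < p i := by
    intro i hi
    have h1 := (hFmem i).mp hi
    by_contra h2
    push_neg at h2
    exact hek i ⟨h1, h2⟩
  have hi0F : i0 ∈ F := by
    rw [hFmem]
    have : (k:ℝ)*w ≤ ((n:ℝ)-2)*w := mul_le_mul_of_nonneg_right hkR hw.le
    nlinarith
  have hj0F : j0 ∉ F := by
    rw [hFmem, ← hL]
    push_neg
    have : 0 ≤ (k:ℝ)*w := by positivity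
    linarith
  obtain ⟨a, b, hab, haF, hbF⟩ :=
    cross_edge (↑F : Set (Fin n)) hreach.some hi0F (by simpa using hj0F)
  have haF' : a ∈ F := haF
  have hbF' : b ∉ F := by simpa using hbF
  have hbNa : b ∈ N a := by
    rw [hN]
    simp only [Finset.mem_filter, Finset.mem_univ, true_and]
    exact ((hG a b).mp hab).2
  have hgap2 : ∀ i ∈ F, ∀ j, j ∉ F → w < p i - p j := by
    intro i hi j hj
    have h1 := hhigh i hi
    have h2 : p j ≤ L + (k:ℝ)*w := le_of_not_gt (fun hc => hj ((hFmem j).mpr hc))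
    have h3 : ((k:ℝ)+1)*w = (k:ℝ)*w + w := by ring
    linarith
  -- mean points and the displacement bound
  set m : Fin n → EuclideanSpace ℝ (Fin d) :=
    fun i => ((N i).card:ℝ)⁻¹ • ∑ j ∈ N i, X j with hm
  have hsum1 : ∀ i, (∑ j ∈ N i, (p i - p j))
      = ((N i).card:ℝ) * (inner ℝ (X i - m i) u : ℝ) := by
    intro i
    have hc : ((N i).card:ℝ) ≠ 0 := (hcard i).ne'
    simp only [hp, hm]
    rw [Finset.sum_sub_distrib, Finset.sum_const, nsmul_eq_mul, inner_sub_left,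
      real_inner_smul_left, ← sum_inner]
    field_simp
  have hsum2 : (∑ i ∈ F, ∑ j ∈ (N i) ∩ F, (p i - p j)) = 0 := by
    have hswap : (∑ i ∈ F, ∑ j ∈ (N i) ∩ F, p i) = ∑ i ∈ F, ∑ j ∈ (N i) ∩ F, p j :=
      Finset.sum_comm' (fun i j => by
        simp only [Finset.mem_inter]
        constructor
        · rintro ⟨hiF, hjN, hjF⟩; exact ⟨⟨(hsym i j).mp hjN, hiF⟩, hjF⟩
        · rintro ⟨⟨hiN, hiF⟩, hjF⟩; exact ⟨hiF, (hsym j i).mp hiN, hjF⟩)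
    simp only [Finset.sum_sub_distrib]
    rw [hswap, sub_self]
  have hpos : ∀ i ∈ F, ∀ j ∈ (N i) \ F, 0 ≤ p i - p j := by
    intro i hi j hj
    have := hgap2 i hi j (Finset.mem_sdiff.mp hj).2
    linarith
  have hkey : w < ∑ i ∈ F, ∑ j ∈ N i, (p i - p j) := by
    have hsplit : ∀ i, (∑ j ∈ N i, (p i - p j))
        = (∑ j ∈ (N i) ∩ F, (p i - p j)) + ∑ j ∈ (N i) \ F, (p i - p j) :=
      fun i => (Finset.sum_inter_add_sum_sdiff _ _ _).symm
    have h1 : w < p a - p b := hgap2 a haF' b hbF'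
    have h2 : p a - p b ≤ ∑ j ∈ (N a) \ F, (p a - p j) :=
      Finset.single_le_sum (f := fun j => p a - p j) (fun j hj => hpos a haF' j hj)
        (Finset.mem_sdiff.mpr ⟨hbNa, hbF'⟩)
    have h3 : (∑ j ∈ (N a) \ F, (p a - p j)) ≤ ∑ i ∈ F, ∑ j ∈ (N i) \ F, (p i - p j) :=
      Finset.single_le_sum (f := fun i => ∑ j ∈ (N i) \ F, (p i - p j))
        (fun i hi => Finset.sum_nonneg (fun j hj => hpos i hi j hj)) haF'
    have h4 : (∑ i ∈ F, ∑ j ∈ N i, (p i - p j))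
        = (∑ i ∈ F, ∑ j ∈ (N i) ∩ F, (p i - p j))
          + ∑ i ∈ F, ∑ j ∈ (N i) \ F, (p i - p j) := by
      rw [← Finset.sum_add_distrib]
      exact Finset.sum_congr rfl fun i _ => hsplit i
    rw [h4, hsum2, zero_add]
    linarith
  have hub : ∀ i ∈ F, ((N i).card:ℝ) * (inner ℝ (X i - m i) u : ℝ) ≤ (n:ℝ) * ‖X i - m i‖ := by
    intro i _
    have h1 : (inner ℝ (X i - m i) u : ℝ) ≤ ‖X i - m i‖ := by
      have h := real_inner_le_norm (X i - m i) u
      rw [hu1, mul_one] at h; exact h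
    rcases le_or_gt 0 (inner ℝ (X i - m i) u : ℝ) with hq | hq
    · calc ((N i).card:ℝ) * (inner ℝ (X i - m i) u : ℝ)
          ≤ (n:ℝ) * (inner ℝ (X i - m i) u : ℝ) := mul_le_mul_of_nonneg_right (hcardn i) hq
        _ ≤ (n:ℝ) * ‖X i - m i‖ := mul_le_mul_of_nonneg_left h1 hnpos.le
    · have hz : ((N i).card:ℝ) * (inner ℝ (X i - m i) u : ℝ) ≤ 0 :=
        mul_nonpos_of_nonneg_of_nonpos (hcard i).le hq.le
      have h2 : 0 ≤ (n:ℝ)*‖X i - m i‖ := by positivity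
      linarith
  have hkey2 : w < (n:ℝ) * ∑ i, ‖X i - m i‖ := by
    have h0 : (∑ i ∈ F, ∑ j ∈ N i, (p i - p j))
        = ∑ i ∈ F, ((N i).card:ℝ) * (inner ℝ (X i - m i) u : ℝ) :=
      Finset.sum_congr rfl fun i _ => hsum1 i
    have h1 : (∑ i ∈ F, ((N i).card:ℝ) * (inner ℝ (X i - m i) u : ℝ))
        ≤ ∑ i ∈ F, (n:ℝ) * ‖X i - m i‖ := Finset.sum_le_sum hub
    have h2 : (∑ i ∈ F, (n:ℝ) * ‖X i - m i‖) ≤ ∑ i, (n:ℝ) * ‖X i - m i‖ :=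
      Finset.sum_le_sum_of_subset_of_nonneg (Finset.subset_univ F)
        (fun i _ _ => by positivity)
    have h3 : (∑ i : Fin n, (n:ℝ) * ‖X i - m i‖) = (n:ℝ) * ∑ i, ‖X i - m i‖ :=
      (Finset.mul_sum _ _ _).symm
    rw [h0] at hkey
    linarith
  have hΔ : ∀ i, X' i - X i = (1 - α i) • (m i - X i) := by
    intro i
    simp only [hm, hupd i, smul_sub, smul_smul, div_eq_mul_inv]
    module
  have hnormΔ : ∀ i, (1-γ) * ‖X i - m i‖ ≤ ‖X' i - X i‖ := by
    intro i
    rw [hΔ i, norm_smul, Real.norm_eq_abs,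
      abs_of_nonneg (by linarith [(hα i).2] : (0:ℝ) ≤ 1 - α i),
      norm_sub_rev (m i) (X i)]
    exact mul_le_mul_of_nonneg_right (by linarith [hγsup i]) (norm_nonneg _)
  by_contra hcon
  push_neg at hcon
  set B : ℝ := (1-γ)*δ / (((n:ℝ)-1) * (n:ℝ)^2) with hB
  have hKpos : (0:ℝ) < ((n:ℝ)-1)^2*(n:ℝ)^4 := mul_pos (pow_pos hn1R 2) (pow_pos hnpos 4)
  have hBpos : 0 < B := div_pos (mul_pos hβ hδ0) (mul_pos hn1R (pow_pos hnpos 2))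
  have hsq : B^2 = ((1-γ)*δ)^2 / (((n:ℝ)-1)^2*(n:ℝ)^4) := by
    rw [hB, div_pow]; congr 1; ring
  have heach : ∀ i, ‖X' i - X i‖ ≤ B := by
    intro i
    have h1 : ‖X' i - X i‖^2 ≤ ∑ i, ‖X' i - X i‖^2 :=
      Finset.single_le_sum (f := fun j => ‖X' j - X j‖^2) (fun j _ => sq_nonneg _)
        (Finset.mem_univ i)
    have h2 : (∑ i, ‖X' i - X i‖^2) ≤ B^2 := by
      rw [hsq, le_div_iff₀ hKpos]; exact hcon
    nlinarith [norm_nonneg (X' i - X i), hBpos]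
  have hfin : (∑ i, ‖X i - m i‖) ≤ (n:ℝ) * (B / (1-γ)) := by
    have hone : ∀ i, ‖X i - m i‖ ≤ B / (1-γ) := by
      intro i
      rw [le_div_iff₀ hβ]
      nlinarith [hnormΔ i, heach i]
    calc (∑ i, ‖X i - m i‖) ≤ ∑ i : Fin n, B/(1-γ) := Finset.sum_le_sum fun i _ => hone i
      _ = (n:ℝ) * (B/(1-γ)) := by
          rw [Finset.sum_const, Finset.card_univ, Fintype.card_fin, nsmul_eq_mul]
  have hmul : (n:ℝ) * (∑ i, ‖X i - m i‖) ≤ (n:ℝ) * ((n:ℝ) * (B/(1-γ))) :=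
    mul_le_mul_of_nonneg_left hfin hnpos.le
  have hId : (n:ℝ) * ((n:ℝ)*(B/(1-γ))) = w := by
    rw [hB, hwdef]
    field_simp
  linarith [hkey2]


private lemma nbr_sum_comm {n : ℕ} (N : Fin n → Finset (Fin n))
    (hsym : ∀ i j, j ∈ N i ↔ i ∈ N j) (f : Fin n → Fin n → ℝ) :
    ∑ i, ∑ j ∈ N i, f i j = ∑ i, ∑ j ∈ N i, f j i :=
  Finset.sum_comm' (fun i j => by simp [hsym i j])

private lemma step_decrease {n d : ℕ} {ε : ℝ} (hε : 0 < ε)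
    (X X' : Fin n → EuclideanSpace ℝ (Fin d)) (α : Fin n → ℝ)
    (hα : ∀ i, α i ∈ Set.Icc (0:ℝ) 1)
    (N : Fin n → Finset (Fin n))
    (hN : ∀ i, N i = Finset.univ.filter (fun j => ‖X i - X j‖ ≤ ε))
    (hupd : ∀ i, X' i = α i • X i + ((1 - α i) / ((N i).card : ℝ)) • ∑ j ∈ N i, X j) :
    (∑ i, ∑ j, min (‖X' i - X' j‖^2) (ε^2)) + 4 * ∑ i, ‖X' i - X i‖^2
      ≤ ∑ i, ∑ j, min (‖X i - X j‖^2) (ε^2) := by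
  have hmem : ∀ i, i ∈ N i := fun i => by simp [hN, hε.le]
  have hsym : ∀ i j, j ∈ N i ↔ i ∈ N j := fun i j => by
    simp only [hN, Finset.mem_filter, Finset.mem_univ, true_and]
    rw [norm_sub_rev]
  have hcard : ∀ i, 0 < ((N i).card : ℝ) := fun i => by
    exact_mod_cast Finset.card_pos.mpr ⟨i, hmem i⟩
  set Δ : Fin n → EuclideanSpace ℝ (Fin d) := fun i => X' i - X i with hΔdef
  set m : Fin n → EuclideanSpace ℝ (Fin d) :=
    fun i => ((N i).card : ℝ)⁻¹ • ∑ j ∈ N i, X j with hmdef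
  have hΔ : ∀ i, Δ i = (1 - α i) • (m i - X i) := by
    intro i
    simp only [hΔdef, hmdef, hupd i, smul_sub, smul_smul, div_eq_mul_inv]
    module
  -- inner product bound per i
  have hinner : ∀ i, (∑ j ∈ N i, (inner ℝ (X i - X j) (Δ i) : ℝ)) ≤ -(((N i).card : ℝ) * ‖Δ i‖^2) := by
    intro i
    have hc : ((N i).card : ℝ) ≠ 0 := (hcard i).ne'
    have h1 : (∑ j ∈ N i, (inner ℝ (X i - X j) (Δ i) : ℝ))
        = ((N i).card : ℝ) * (inner ℝ (X i) (Δ i) : ℝ) - (inner ℝ (∑ j ∈ N i, X j) (Δ i) : ℝ) := by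
      simp only [inner_sub_left]
      rw [Finset.sum_sub_distrib, Finset.sum_const, nsmul_eq_mul, sum_inner]
    have h2 : (inner ℝ (∑ j ∈ N i, X j) (Δ i) : ℝ) = ((N i).card:ℝ) * (inner ℝ (m i) (Δ i) : ℝ) := by
      simp only [hmdef]
      rw [real_inner_smul_left]
      field_simp
    have h3 : (inner ℝ (X i - m i) (Δ i) : ℝ) = -((1 - α i) * ‖m i - X i‖^2) := by
      rw [hΔ i, real_inner_smul_right]
      rw [show X i - m i = -(m i - X i) from (neg_sub _ _).symm]
      rw [inner_neg_left, real_inner_self_eq_norm_sq]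
      ring
    have h4 : ‖Δ i‖^2 = (1-α i)^2 * ‖m i - X i‖^2 := by
      rw [hΔ i, norm_smul, mul_pow, Real.norm_eq_abs, sq_abs]
    have hα2 : (1 - α i)^2 ≤ (1 - α i) := by nlinarith [(hα i).1, (hα i).2]
    have h5 : (∑ j ∈ N i, (inner ℝ (X i - X j) (Δ i) : ℝ))
        = -(((N i).card:ℝ) * ((1-α i) * ‖m i - X i‖^2)) := by
      rw [h1, h2, ← mul_sub, ← inner_sub_left, h3]; ring
    rw [h5, h4]
    have h6 : ((N i).card:ℝ) * ((1-α i)^2 * ‖m i - X i‖^2)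
        ≤ ((N i).card:ℝ)*((1-α i) * ‖m i - X i‖^2) := by
      apply mul_le_mul_of_nonneg_left _ (hcard i).le
      exact mul_le_mul_of_nonneg_right hα2 (sq_nonneg _)
    linarith
  -- step 1 : per-pair min comparison
  have step1 : ∀ i j, min (‖X' i - X' j‖^2) (ε^2)
      ≤ min (‖X i - X j‖^2) (ε^2)
        + (if j ∈ N i then ‖X' i - X' j‖^2 - ‖X i - X j‖^2 else 0) := by
    intro i j
    by_cases h : j ∈ N i
    · rw [if_pos h]
      have hle : ‖X i - X j‖ ≤ ε := by
        rw [hN i] at h; simpa using h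
      have hmin : min (‖X i - X j‖^2) (ε^2) = ‖X i - X j‖^2 :=
        min_eq_left (by nlinarith [norm_nonneg (X i - X j)])
      rw [hmin]
      have := min_le_left (‖X' i - X' j‖^2) (ε^2); linarith
    · rw [if_neg h]
      have hgt : ε < ‖X i - X j‖ := by
        rw [hN i] at h; simp at h; exact h
      have hmin : min (‖X i - X j‖^2) (ε^2) = ε^2 :=
        min_eq_right (by nlinarith [norm_nonneg (X i - X j)])
      rw [hmin]
      simpa using min_le_right (‖X' i - X' j‖^2) (ε^2)
  have step2 : (∑ i, ∑ j, min (‖X' i - X' j‖^2) (ε^2))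
      ≤ (∑ i, ∑ j, min (‖X i - X j‖^2) (ε^2))
        + ∑ i, ∑ j ∈ N i, (‖X' i - X' j‖^2 - ‖X i - X j‖^2) := by
    calc ∑ i, ∑ j, min (‖X' i - X' j‖^2) (ε^2)
        ≤ ∑ i, ∑ j, (min (‖X i - X j‖^2) (ε^2)
            + (if j ∈ N i then ‖X' i - X' j‖^2 - ‖X i - X j‖^2 else 0)) :=
          Finset.sum_le_sum (fun i _ => Finset.sum_le_sum fun j _ => step1 i j)
      _ = _ := by
          simp only [Finset.sum_add_distrib, Finset.sum_ite_mem, Finset.univ_inter]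
  -- expansion
  have expand : ∀ i j, ‖X' i - X' j‖^2 - ‖X i - X j‖^2
      = (2*(inner ℝ (X i - X j) (Δ i) : ℝ) - 2*(inner ℝ (X i - X j) (Δ j) : ℝ))
        + ((2*‖Δ i‖^2 + 2*‖Δ j‖^2) - ‖Δ i + Δ j‖^2) := by
    intro i j
    have h1 : X' i - X' j = (X i - X j) + (Δ i - Δ j) := by
      simp only [hΔdef]; abel
    have h2 : ‖Δ i - Δ j‖^2 = 2*‖Δ i‖^2 + 2*‖Δ j‖^2 - ‖Δ i + Δ j‖^2 := by
      have ha := norm_add_sq_real (Δ i) (Δ j)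
      have hb := norm_sub_sq_real (Δ i) (Δ j)
      linarith
    rw [h1, norm_add_sq_real, inner_sub_right, h2]; ring
  -- assemble the double sum bound
  have hsum2 : (∑ i, ∑ j ∈ N i, (‖X' i - X' j‖^2 - ‖X i - X j‖^2))
      ≤ -(4 * ∑ i, ‖Δ i‖^2) := by
    have e1 : (∑ i, ∑ j ∈ N i, (‖X' i - X' j‖^2 - ‖X i - X j‖^2))
        = (∑ i, ∑ j ∈ N i, 2*(inner ℝ (X i - X j) (Δ i) : ℝ))
          - (∑ i, ∑ j ∈ N i, 2*(inner ℝ (X i - X j) (Δ j) : ℝ))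
          + ((∑ i, ∑ j ∈ N i, (2*‖Δ i‖^2 + 2*‖Δ j‖^2))
             - ∑ i, ∑ j ∈ N i, ‖Δ i + Δ j‖^2) := by
      simp only [expand, Finset.sum_add_distrib, Finset.sum_sub_distrib]
    have e2 : (∑ i, ∑ j ∈ N i, 2*(inner ℝ (X i - X j) (Δ j) : ℝ))
        = -∑ i, ∑ j ∈ N i, 2*(inner ℝ (X i - X j) (Δ i) : ℝ) := by
      rw [nbr_sum_comm N hsym (fun i j => 2*(inner ℝ (X i - X j) (Δ j) : ℝ))]
      rw [← Finset.sum_neg_distrib]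
      apply Finset.sum_congr rfl; intro i _
      rw [← Finset.sum_neg_distrib]
      apply Finset.sum_congr rfl; intro j _
      rw [show X j - X i = -(X i - X j) from (neg_sub _ _).symm, inner_neg_left]; ring
    have e3 : (∑ i, ∑ j ∈ N i, (2*‖Δ i‖^2 + 2*‖Δ j‖^2))
        = ∑ i, ((N i).card:ℝ) * (4*‖Δ i‖^2) := by
      simp only [Finset.sum_add_distrib]
      rw [nbr_sum_comm N hsym (fun i j => 2*‖Δ j‖^2)]
      rw [← Finset.sum_add_distrib]
      apply Finset.sum_congr rfl; intro i _
      simp only [Finset.sum_const, nsmul_eq_mul]; ring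
    have e5 : (∑ i, (4:ℝ)*‖Δ i‖^2) ≤ ∑ i, ∑ j ∈ N i, ‖Δ i + Δ j‖^2 := by
      apply Finset.sum_le_sum; intro i _
      have h : ‖Δ i + Δ i‖^2 ≤ ∑ j ∈ N i, ‖Δ i + Δ j‖^2 :=
        Finset.single_le_sum (f := fun j => ‖Δ i + Δ j‖^2) (fun j _ => sq_nonneg _) (hmem i)
      have h2 : ‖Δ i + Δ i‖^2 = 4*‖Δ i‖^2 := by
        rw [norm_add_sq_real, real_inner_self_eq_norm_sq]; ring
      linarith
    have e6 : (∑ i, ∑ j ∈ N i, 2*(inner ℝ (X i - X j) (Δ i) : ℝ))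
        ≤ ∑ i, -(2*(((N i).card:ℝ) * ‖Δ i‖^2)) := by
      apply Finset.sum_le_sum; intro i _
      rw [← Finset.mul_sum]
      have := hinner i
      nlinarith
    have e7 : (∑ i, -(2*(((N i).card:ℝ) * ‖Δ i‖^2)))
        = -(2 * ∑ i, ((N i).card:ℝ) * ‖Δ i‖^2) := by
      rw [Finset.sum_neg_distrib, Finset.mul_sum]
    have e8 : (∑ i, ((N i).card:ℝ) * (4*‖Δ i‖^2))
        = 4 * ∑ i, ((N i).card:ℝ) * ‖Δ i‖^2 := by
      rw [Finset.mul_sum]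
      apply Finset.sum_congr rfl; intro i _; ring
    have e9 : (∑ i, (4:ℝ)*‖Δ i‖^2) = 4 * ∑ i, ‖Δ i‖^2 := by
      rw [Finset.mul_sum]
    rw [e1, e2, e3, e8]
    rw [e7] at e6
    linarith [e5, e6, e9]
  have : (∑ i, ‖X' i - X i‖^2) = ∑ i, ‖Δ i‖^2 := rfl
  linarith [step2, hsum2]




/-- Corollary 1 (bound on the time to δ-triviality): if
`sup_t max_i αᵢ(t) = γ < 1`, then the first time `τ` at which every component
of the profile graph is δ-trivial satisfies
`τ < n^10 (ε/δ)² / (8 (1-γ)²)`. -/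
theorem mixedHK_tau_bound (n d : ℕ) (hn : 0 < n) (ε δ : ℝ) (hε : 0 < ε)
    (hδ0 : 0 < δ) (hδε : δ ≤ ε)
    (x : ℕ → Fin n → EuclideanSpace ℝ (Fin d))
    (α : ℕ → Fin n → ℝ) (hα : ∀ t i, α t i ∈ Set.Icc (0 : ℝ) 1)
    (N : ℕ → Fin n → Finset (Fin n))
    (hN : ∀ t i, N t i = Finset.univ.filter (fun j => ‖x t i - x t j‖ ≤ ε))
    (hupd : ∀ t i, x (t + 1) i
      = α t i • x t i + ((1 - α t i) / ((N t i).card : ℝ)) • ∑ j ∈ N t i, x t j)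
    (G : ℕ → SimpleGraph (Fin n))
    (hG : ∀ t i j, (G t).Adj i j ↔ i ≠ j ∧ ‖x t i - x t j‖ ≤ ε)
    (γ : ℝ) (hγ : γ < 1) (hγsup : ∀ t i, α t i ≤ γ)
    (τ : ℕ)
    (hτ : τ = sInf {t : ℕ | ∀ i j, (G t).Reachable i j → ‖x t i - x t j‖ ≤ δ}) :
    (τ : ℝ) < (n : ℝ) ^ 10 * (ε / δ) ^ 2 / (8 * (1 - γ) ^ 2) := by
  have hβ : (0:ℝ) < 1 - γ := by linarith
  have hnpos : (0:ℝ) < n := by exact_mod_cast hn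
  rcases Nat.eq_zero_or_pos τ with hτ0 | hτpos
  · rw [hτ0, Nat.cast_zero]
    positivity
  · -- every time before τ is "bad"
    have hbad : ∀ t, t < τ → ∃ i j, (G t).Reachable i j ∧ δ < ‖x t i - x t j‖ := by
      intro t ht
      have hmem : t ∉ {t : ℕ | ∀ i j, (G t).Reachable i j → ‖x t i - x t j‖ ≤ δ} := by
        apply Nat.notMem_of_lt_sInf
        rw [← hτ]; exact ht
      simp only [Set.mem_setOf_eq, not_forall] at hmem
      obtain ⟨i, j, hr, hle⟩ := hmem
      exact ⟨i, j, hr, lt_of_not_ge hle⟩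
    obtain ⟨i0, j0, _, hfar0⟩ := hbad 0 hτpos
    have hne : i0 ≠ j0 := by
      rintro rfl; rw [sub_self, norm_zero] at hfar0; linarith
    have hn1 : 1 < n := by
      have : Nontrivial (Fin n) := ⟨⟨i0, j0, hne⟩⟩
      simpa using Fintype.one_lt_card_iff_nontrivial.mpr this
    have hnR : (2:ℝ) ≤ (n:ℝ) := by exact_mod_cast hn1
    have hn1R : (0:ℝ) < (n:ℝ) - 1 := by linarith
    -- Lyapunov / energy bound
    set V : ℕ → ℝ := fun t => ∑ i, ∑ j, min (‖x t i - x t j‖^2) (ε^2) with hV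
    set s : ℕ → ℝ := fun t => ∑ i, ‖x (t+1) i - x t i‖^2 with hs
    have hVstep : ∀ t, V (t+1) + 4 * s t ≤ V t := fun t =>
      step_decrease hε (x t) (x (t+1)) (α t) (hα t) (N t) (hN t) (hupd t)
    have hV0 : V 0 ≤ (n:ℝ)^2 * ε^2 := by
      rw [hV]
      calc (∑ i, ∑ j, min (‖x 0 i - x 0 j‖^2) (ε^2))
          ≤ ∑ i : Fin n, ∑ j : Fin n, ε^2 :=
            Finset.sum_le_sum fun i _ => Finset.sum_le_sum fun j _ => min_le_right _ _
        _ = (n:ℝ)^2 * ε^2 := by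
            simp [Finset.sum_const, Finset.card_univ, nsmul_eq_mul]; ring
    have hVnn : ∀ T, 0 ≤ V T := by
      intro T
      apply Finset.sum_nonneg; intro i _
      apply Finset.sum_nonneg; intro j _
      exact le_min (sq_nonneg _) (sq_nonneg _)
    have hEnergy : 4 * ∑ t ∈ Finset.range τ, s t ≤ (n:ℝ)^2 * ε^2 := by
      have h1 : (∑ t ∈ Finset.range τ, 4 * s t)
          ≤ ∑ t ∈ Finset.range τ, (V t - V (t+1)) :=
        Finset.sum_le_sum fun t _ => by linarith [hVstep t]
      rw [Finset.sum_range_sub' V τ] at h1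
      rw [← Finset.mul_sum] at h1
      linarith [hVnn τ, hV0]
    -- per-step lower bound on bad steps
    set K : ℝ := ((n:ℝ)-1)^2 * (n:ℝ)^4 with hK
    have hKpos : 0 < K := mul_pos (pow_pos hn1R 2) (pow_pos hnpos 4)
    set c0 : ℝ := ((1-γ)*δ)^2 / K with hc0
    have hstep : ∀ t ∈ Finset.range τ, c0 < s t := by
      intro t ht
      obtain ⟨i1, j1, hr, hf⟩ := hbad t (Finset.mem_range.mp ht)
      have hb := bad_step hε hδ0 hγ (x t) (x (t+1)) (α t) (hα t) (hγsup t)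
        (N t) (hN t) (hupd t) (G t) (hG t) i1 j1 hr hf
      rw [hc0, div_lt_iff₀ hKpos]
      exact hb
    have hlt : (τ:ℝ) * c0 < ∑ t ∈ Finset.range τ, s t := by
      have h := Finset.sum_lt_sum_of_nonempty
        (Finset.nonempty_range_iff.mpr hτpos.ne') hstep
      simpa [Finset.sum_const, Finset.card_range, nsmul_eq_mul] using h
    have hτc : (τ:ℝ) * c0 < (n:ℝ)^2*ε^2/4 := by linarith
    have hmain : (τ:ℝ) * ((1-γ)*δ)^2 < (n:ℝ)^2*ε^2/4 * K := by
      rw [hc0, ← mul_div_assoc] at hτc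
      exact (div_lt_iff₀ hKpos).mp hτc
    rw [lt_div_iff₀ (by positivity : (0:ℝ) < 8*(1-γ)^2), div_pow, ← mul_div_assoc,
      lt_div_iff₀ (by positivity : (0:ℝ) < δ^2)]
    have hpoly : 2*((n:ℝ)-1)^2 ≤ (n:ℝ)^4 := by nlinarith
    have hpoly2 : 2*((n:ℝ)-1)^2 * ((n:ℝ)^6*ε^2) ≤ (n:ℝ)^4 * ((n:ℝ)^6*ε^2) :=
      mul_le_mul_of_nonneg_right hpoly (by positivity)
    rw [hK] at hmain
    nlinarith [hmain]
end
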